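/- arXiv:1210.2803 — 11 statements merged into one kernel-verified Lean document; each statement's English description precedes it below -/
import Mathlib

section
/- Let p : G → H be a graph homomorphism between graphs. If for every vertex v of G the restriction p|_{N(v)} : N(v) → N(p(v)) is surjective and the restriction p|_{N₂(v)} : N₂(v) → N₂(p(v)) is injective, then p is a 2-covering map, i.e., both restrictions are bijective for every vertex v. -/
/-- The neighborhood `N(v)` of a vertex in a graph given by its edge relation. -/
def Nbhd {V : Type*} (E : V → V → Prop) (v : V) : Set V := {w | E v w}

/-- The second neighborhood `N₂(v) = N(N(v))`. -/
def Nbhd2 {V : Type*} (E : V → V → Prop) (v : V) : Set V := {w | ∃ u, E v u ∧ E u w}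

/-- A graph homomorphism between graphs given by edge relations. -/
def IsGraphHom {V W : Type*} (E : V → V → Prop) (F : W → W → Prop) (p : V → W) : Prop :=
  ∀ x y, E x y → F (p x) (p y)

/-- A 2-covering map: a graph homomorphism restricting to bijections
`N(v) → N(p v)` and `N₂(v) → N₂(p v)` for every vertex `v`. -/
def IsTwoCovering {V W : Type*} (E : V → V → Prop) (F : W → W → Prop) (p : V → W) : Prop :=
  IsGraphHom E F p ∧
    ∀ v, Set.BijOn p (Nbhd E v) (Nbhd F (p v)) ∧ Set.BijOn p (Nbhd2 E v) (Nbhd2 F (p v))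

/-- if for every vertex the restriction of `p` to `N(v)` is surjective onto
`N(p v)` and the restriction to `N₂(v)` is injective, then `p` is a 2-covering map. -/
theorem two_covering_of_surjOn_injOn {V W : Type*} (E : V → V → Prop) (F : W → W → Prop)
    (hEsymm : ∀ x y, E x y → E y x) (hFsymm : ∀ x y, F x y → F y x)
    (p : V → W) (hp : IsGraphHom E F p)
    (hsurj : ∀ v, Set.SurjOn p (Nbhd E v) (Nbhd F (p v)))
    (hinj : ∀ v, Set.InjOn p (Nbhd2 E v)) :
    IsTwoCovering E F p := by
  refine ⟨hp, fun v => ⟨⟨fun w hw => hp v w hw, ?_, hsurj v⟩,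
    ⟨fun w hw => ?_, hinj v, ?_⟩⟩⟩
  · -- InjOn on N(v): both points lie in N₂(w₁)
    intro w1 h1 w2 h2 heq
    exact hinj w1 ⟨v, hEsymm _ _ h1, h1⟩ ⟨v, hEsymm _ _ h1, h2⟩ heq
  · -- MapsTo on N₂
    obtain ⟨u, hvu, huw⟩ := hw
    exact ⟨p u, hp v u hvu, hp u w huw⟩
  · -- SurjOn on N₂
    rintro y ⟨u', hu', huy⟩
    obtain ⟨u, hu, rfl⟩ := hsurj v hu'
    obtain ⟨w, hw, rfl⟩ := hsurj u huy
    exact ⟨w, ⟨u, hu, hw⟩, rfl⟩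
end

section
/- Homotopy lifting property for 2-coverings: let p : G → H be a 2-covering map and T a graph with no isolated vertices. Given a graph homomorphism F : T × I₁ → H and a graph homomorphism f : T → G with F(x,0) = p(f(x)) for all vertices x of T, there exists a unique graph homomorphism F̃ : T × I₁ → G with F̃(x,0) = f(x) for all x and p∘F̃ = F. -/
/-- homotopy lifting property for 2-covering maps. The graph `T × I₁` is
modelled on `VT × Bool`, where all pairs of elements of `Bool` are edges of `I₁`. -/
theorem two_covering_homotopy_lifting {VT VG VH : Type*}
    (ET : VT → VT → Prop) (E : VG → VG → Prop) (F : VH → VH → Prop)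
    (hTsymm : ∀ x y, ET x y → ET y x) (hEsymm : ∀ x y, E x y → E y x)
    (hFsymm : ∀ x y, F x y → F y x)
    (hTnoiso : ∀ x : VT, ∃ y, ET x y)
    (p : VG → VH) (hp : IsTwoCovering E F p)
    (Fb : VT × Bool → VH)
    (hFb : IsGraphHom (fun a b : VT × Bool => ET a.1 b.1) F Fb)
    (f : VT → VG) (hf : IsGraphHom ET E f)
    (h0 : ∀ x : VT, Fb (x, false) = p (f x)) :
    ∃! Ft : VT × Bool → VG,
      IsGraphHom (fun a b : VT × Bool => ET a.1 b.1) E Ft ∧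
        (∀ x : VT, Ft (x, false) = f x) ∧ p ∘ Ft = Fb := by
  classical
  obtain ⟨hphom, hpbij⟩ := hp
  choose nb hnb using hTnoiso
  have key : ∀ x y, ET x y → ∃ u, E (f y) u ∧ p u = Fb (x, true) := by
    intro x y hxy
    have h1 : F (Fb (y, false)) (Fb (x, true)) :=
      hFb (y, false) (x, true) (hTsymm _ _ hxy)
    have h2 : Fb (x, true) ∈ Nbhd F (p (f y)) := by
      rw [← h0 y]; exact h1
    obtain ⟨u, hu, hpu⟩ := (hpbij (f y)).1.2.2 h2
    exact ⟨u, hu, hpu⟩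
  choose g hg1 hg2 using key
  have gwd : ∀ x y y' (h : ET x y) (h' : ET x y'), g x y h = g x y' h' := by
    intro x y y' h h'
    have hx2 : g x y h ∈ Nbhd2 E (f x) := ⟨f y, hf _ _ h, hg1 _ _ h⟩
    have hx2' : g x y' h' ∈ Nbhd2 E (f x) := ⟨f y', hf _ _ h', hg1 _ _ h'⟩
    exact (hpbij (f x)).2.2.1 hx2 hx2' (by rw [hg2, hg2])
  set Ft : VT × Bool → VG := fun a =>
    match a with
    | (x, false) => f x
    | (x, true) => g x (nb x) (hnb x) with hFtdef
  have hFtf : ∀ x, Ft (x, false) = f x := fun x => rfl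
  have hFtt : ∀ x, Ft (x, true) = g x (nb x) (hnb x) := fun x => rfl
  have hpFt : ∀ a, p (Ft a) = Fb a := by
    rintro ⟨x, _ | _⟩
    · exact (h0 x).symm
    · exact hg2 x (nb x) (hnb x)
  have hhom : IsGraphHom (fun a b : VT × Bool => ET a.1 b.1) E Ft := by
    rintro ⟨x, i⟩ ⟨y, j⟩ hxy
    simp only at hxy
    match i, j with
    | false, false => exact hf _ _ hxy
    | false, true =>
        have := hg1 y x (hTsymm _ _ hxy)
        rwa [gwd y x (nb y) (hTsymm _ _ hxy) (hnb y)] at this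
    | true, false =>
        have := hg1 x y hxy
        rw [gwd x y (nb x) hxy (hnb x)] at this
        exact hEsymm _ _ this
    | true, true =>
        have hu1 : E (f y) (Ft (x, true)) := by
          rw [hFtt, ← gwd x y (nb x) hxy (hnb x)]; exact hg1 x y hxy
        have hpu : p (Ft (x, true)) = Fb (x, true) := hpFt (x, true)
        have hF : F (p (Ft (x, true))) (Fb (y, true)) := by
          rw [hpu]; exact hFb (x, true) (y, true) hxy
        obtain ⟨w, hw, hpw⟩ := (hpbij (Ft (x, true))).1.2.2 hF
        have hw2 : w ∈ Nbhd2 E (f y) := ⟨Ft (x, true), hu1, hw⟩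
        have hFty : Ft (y, true) = g y x (hTsymm _ _ hxy) := by
          rw [hFtt]; exact (gwd y x (nb y) (hTsymm _ _ hxy) (hnb y)).symm
        have ht2 : Ft (y, true) ∈ Nbhd2 E (f y) := by
          rw [hFty]
          exact ⟨f x, hEsymm _ _ (hf _ _ hxy), hg1 y x (hTsymm _ _ hxy)⟩
        have : w = Ft (y, true) := by
          refine (hpbij (f y)).2.2.1 hw2 ht2 ?_
          rw [hpw]; exact (hpFt _).symm
        rw [← this]; exact hw
  refine ⟨Ft, ⟨hhom, hFtf, funext hpFt⟩, ?_⟩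
  rintro Ft' ⟨hhom', h0', hcomp'⟩
  funext a
  obtain ⟨x, _ | _⟩ := a
  · rw [h0' x, hFtf]
  · have h := hnb x
    have hmem : Ft' (x, true) ∈ Nbhd E (f (nb x)) := by
      have := hhom' (nb x, false) (x, true) (hTsymm _ _ h)
      rwa [h0' (nb x)] at this
    have hmem' : g x (nb x) h ∈ Nbhd E (f (nb x)) := hg1 x (nb x) h
    have hpe : p (Ft' (x, true)) = p (g x (nb x) h) := by
      rw [hg2, ← hcomp']; rfl
    exact (hpbij (f (nb x))).1.2.1 hmem hmem' hpe
end

section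
/- Let G be a graph having no isolated vertices, Γ a group acting on G on the right by graph automorphisms. Then the action is a 2-covering action (i.e., N₂(v) ∩ N₂(vγ) = ∅ for every vertex v and every γ ≠ e) if and only if the action is free and the quotient map p : G → G/Γ is a 2-covering map. -/
/-- for a graph without isolated vertices with a right action of a group Γ
by graph automorphisms, the action is a 2-covering action (second neighborhoods of
distinct translates are disjoint) iff the action is free and the quotient map to the
quotient graph is a 2-covering map. -/
theorem two_covering_action_iff {V : Type*} {Γ : Type*} [Group Γ]
    (E : V → V → Prop) (hsymm : ∀ x y, E x y → E y x)
    (act : V → Γ → V)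
    (hone : ∀ v, act v 1 = v)
    (hmul : ∀ v g h, act (act v g) h = act v (g * h))
    (hedge : ∀ x y g, E x y → E (act x g) (act y g))
    (hnoiso : ∀ v : V, ∃ w, E v w) :
    (∀ (v : V) (γ : Γ), γ ≠ 1 → Nbhd2 E v ∩ Nbhd2 E (act v γ) = ∅) ↔
      ((∀ (v : V) (γ : Γ), act v γ = v → γ = 1) ∧
        IsTwoCovering E
          (fun a b => ∃ x y : V, Quot.mk (fun u u' => ∃ g : Γ, act u g = u') x = a ∧
            Quot.mk (fun u u' => ∃ g : Γ, act u g = u') y = b ∧ E x y)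
          (Quot.mk (fun u u' => ∃ g : Γ, act u g = u'))) := by
  classical
  set r : V → V → Prop := fun u u' => ∃ g : Γ, act u g = u' with hrdef
  have hre : Equivalence r := by
    constructor
    · intro x; exact ⟨1, hone x⟩
    · rintro x y ⟨g, hg⟩
      exact ⟨g⁻¹, by rw [← hg, hmul, mul_inv_cancel, hone]⟩
    · rintro x y z ⟨g, hg⟩ ⟨h, hh⟩
      exact ⟨g * h, by rw [← hmul, hg, hh]⟩
  have key : ∀ x y : V, Relation.EqvGen r x y → r x y := by
    intro x y h
    induction h with
    | rel _ _ h => exact h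
    | refl _ => exact hre.refl _
    | symm _ _ _ ih => exact hre.symm ih
    | trans _ _ _ _ _ ih1 ih2 => exact hre.trans ih1 ih2
  have hq : ∀ x y : V, Quot.mk r x = Quot.mk r y ↔ ∃ g : Γ, act x g = y :=
    fun x y => ⟨fun h => key x y (Quot.eq.mp h), fun h => Quot.sound h⟩
  -- v ∈ N₂ v always
  have hself : ∀ v : V, v ∈ Nbhd2 E v := by
    intro v
    obtain ⟨w, hw⟩ := hnoiso v
    exact ⟨w, hw, hsymm _ _ hw⟩
  have hN2act : ∀ (v w : V) (g : Γ), w ∈ Nbhd2 E v → act w g ∈ Nbhd2 E (act v g) := by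
    rintro v w g ⟨u, h1, h2⟩
    exact ⟨act u g, hedge _ _ g h1, hedge _ _ g h2⟩
  constructor
  · intro H
    have hfree : ∀ (v : V) (γ : Γ), act v γ = v → γ = 1 := by
      intro v γ hfix
      by_contra hγ
      have := H v γ hγ
      rw [hfix] at this
      have : v ∈ Nbhd2 E v ∩ Nbhd2 E v := ⟨hself v, hself v⟩
      rw [‹Nbhd2 E v ∩ Nbhd2 E v = ∅›] at this
      exact this
    -- disjointness of first neighborhoods
    have hNdisj : ∀ (v : V) (γ : Γ), γ ≠ 1 → ∀ w, E v w → E (act v γ) w → False := by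
      intro v γ hγ w h1 h2
      have hmem : act v γ ∈ Nbhd2 E v ∩ Nbhd2 E (act v γ) :=
        ⟨⟨w, h1, hsymm _ _ h2⟩, hself _⟩
      rw [H v γ hγ] at hmem
      exact hmem
    refine ⟨hfree, fun x y hxy => ⟨x, y, rfl, rfl, hxy⟩, fun v => ⟨⟨?_, ?_, ?_⟩, ⟨?_, ?_, ?_⟩⟩⟩
    · -- MapsTo N
      intro w hw
      exact ⟨v, w, rfl, rfl, hw⟩
    · -- InjOn N
      intro w hw w' hw' heq
      obtain ⟨g, hg⟩ := (hq w w').mp heq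
      rcases eq_or_ne g 1 with h1 | h1
      · rw [h1, hone] at hg; exact hg
      · exact (hNdisj v g h1 w' hw' (hg ▸ hedge v w g hw)).elim
    · -- SurjOn N
      rintro b ⟨x, y, hx, hy, hxy⟩
      obtain ⟨g, hg⟩ := (hq x v).mp hx
      refine ⟨act y g, ?_, ?_⟩
      · show E v (act y g)
        rw [← hg]; exact hedge x y g hxy
      · rw [← hy]
        exact (Quot.sound ⟨g⁻¹, by rw [hmul, mul_inv_cancel, hone]⟩ :
          Quot.mk r (act y g) = Quot.mk r y)
    · -- MapsTo N₂
      rintro w ⟨u, h1, h2⟩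
      exact ⟨Quot.mk r u, ⟨v, u, rfl, rfl, h1⟩, ⟨u, w, rfl, rfl, h2⟩⟩
    · -- InjOn N₂
      intro w hw w' hw' heq
      obtain ⟨g, hg⟩ := (hq w w').mp heq
      rcases eq_or_ne g 1 with h1 | h1
      · rw [h1, hone] at hg; exact hg
      · exfalso
        have hmem : w' ∈ Nbhd2 E v ∩ Nbhd2 E (act v g) := ⟨hw', hg ▸ hN2act v w g hw⟩
        rw [H v g h1] at hmem
        exact hmem
    · -- SurjOn N₂
      rintro b ⟨u, ⟨x, y, hx, hy, hxy⟩, ⟨x', y', hx', hy', hx'y'⟩⟩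
      obtain ⟨g, hg⟩ := (hq x v).mp hx
      have hyu : Quot.mk r (act y g) = u := by
        rw [← hy]
        exact Quot.sound ⟨g⁻¹, by rw [hmul, mul_inv_cancel, hone]⟩
      obtain ⟨h, hh⟩ := (hq x' (act y g)).mp (hx'.trans hyu.symm)
      refine ⟨act y' h, ⟨act y g, ?_, ?_⟩, ?_⟩
      · rw [← hg]; exact hedge x y g hxy
      · rw [← hh]; exact hedge x' y' h hx'y'
      · rw [← hy']
        exact Quot.sound ⟨h⁻¹, by rw [hmul, mul_inv_cancel, hone]⟩
  · rintro ⟨hfree, _, hbij⟩ v γ hγ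
    ext w
    simp only [Set.mem_inter_iff, Set.mem_empty_iff_false, iff_false, not_and]
    intro h1 h2
    have h3 : act w γ⁻¹ ∈ Nbhd2 E v := by
      have := hN2act (act v γ) w γ⁻¹ h2
      rwa [hmul, mul_inv_cancel, hone] at this
    have heq : Quot.mk r w = Quot.mk r (act w γ⁻¹) := Quot.sound ⟨γ⁻¹, rfl⟩
    have := (hbij v).2.injOn h1 h3 heq
    exact hγ (by simpa using (hfree w γ⁻¹ this.symm))
end

section
/- Let G be a connected graph without isolated vertices, carrying an effective right action of a group Γ by graph automorphisms such that the quotient map G → G/Γ is a 2-covering map. Then the action is free. -/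
/-- an effective right action by graph automorphisms on a connected graph
without isolated vertices whose quotient map is a 2-covering map is free. -/
theorem free_of_effective_two_covering_quotient {V : Type*} {Γ : Type*} [Group Γ]
    (E : V → V → Prop) (hsymm : ∀ x y, E x y → E y x)
    (hconn : ∀ a b : V, Relation.ReflTransGen E a b)
    (hnoiso : ∀ v : V, ∃ w, E v w)
    (act : V → Γ → V)
    (hone : ∀ v, act v 1 = v)
    (hmul : ∀ v g h, act (act v g) h = act v (g * h))
    (hedge : ∀ x y g, E x y → E (act x g) (act y g))
    (heff : ∀ γ : Γ, (∀ v, act v γ = v) → γ = 1)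
    (hquot : IsTwoCovering E
      (fun a b => ∃ x y : V, Quot.mk (fun u u' => ∃ g : Γ, act u g = u') x = a ∧
        Quot.mk (fun u u' => ∃ g : Γ, act u g = u') y = b ∧ E x y)
      (Quot.mk (fun u u' => ∃ g : Γ, act u g = u'))) :
    ∀ (v : V) (γ : Γ), act v γ = v → γ = 1 := by
  intro v γ hfix
  apply heff
  have key : ∀ b, Relation.ReflTransGen E v b → act b γ = b := by
    intro b hb
    induction hb with
    | refl => exact hfix
    | tail hE ih =>
      rename_i a b hva
      have hq : Quot.mk (fun u u' => ∃ g : Γ, act u g = u') (act b γ)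
          = Quot.mk (fun u u' => ∃ g : Γ, act u g = u') b :=
        (Quot.sound ⟨γ, rfl⟩).symm
      have hmem1 : b ∈ Nbhd E a := ih
      have hmem2 : act b γ ∈ Nbhd E a := by
        have h2 := hedge a b γ ih
        rwa [hva] at h2
      exact (hquot.2 a).1.injOn hmem2 hmem1 hq
  intro w
  exact key w (hconn v w)
end

section
/- Let f : G → H be a graph homomorphism and p : K → H a 2-covering map. Define the pullback graph f*K with vertices {(x,y) ∈ V(G)×V(K) | f(x) = p(y)} and edges ((x₁,y₁),(x₂,y₂)) iff (x₁,x₂) ∈ E(G) and (y₁,y₂) ∈ E(K). Then the first projection q : f*K → G, (x,y) ↦ x, is a 2-covering map. -/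
/-- the pullback of a 2-covering map along a graph homomorphism is
a 2-covering map (via the first projection). -/
theorem two_covering_pullback {VG VK VH : Type*}
    (EG : VG → VG → Prop) (EK : VK → VK → Prop) (EH : VH → VH → Prop)
    (hGsymm : ∀ x y, EG x y → EG y x) (hKsymm : ∀ x y, EK x y → EK y x)
    (hHsymm : ∀ x y, EH x y → EH y x)
    (f : VG → VH) (hf : IsGraphHom EG EH f)
    (p : VK → VH) (hp : IsTwoCovering EK EH p) :
    IsTwoCovering
      (fun a b : {z : VG × VK // f z.1 = p z.2} => EG a.1.1 b.1.1 ∧ EK a.1.2 b.1.2)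
      EG (fun z => z.1.1) := by

  obtain ⟨hpHom, hpBij⟩ := hp
  constructor
  · intro a b hab; exact hab.1
  · rintro ⟨⟨x, y⟩, hxy⟩
    simp only at hxy
    constructor
    · refine ⟨?_, ?_, ?_⟩
      · rintro ⟨⟨x1, y1⟩, h1⟩ ⟨he, hk⟩; exact he
      · rintro ⟨⟨x1, y1⟩, h1⟩ ⟨he1, hk1⟩ ⟨⟨x2, y2⟩, h2⟩ ⟨he2, hk2⟩ hfst
        simp only at hfst h1 h2
        subst hfst
        have hy : y1 = y2 := (hpBij y).1.2.1 hk1 hk2 (by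
          show p y1 = p y2; rw [← h1, ← h2])
        subst hy; rfl
      · intro x1 hx1
        have hmem : f x1 ∈ Nbhd EH (p y) := by
          show EH (p y) (f x1); rw [← hxy]; exact hf _ _ hx1
        obtain ⟨y1, hy1, hpy1⟩ := (hpBij y).1.2.2 hmem
        exact ⟨⟨⟨x1, y1⟩, hpy1.symm⟩, ⟨hx1, hy1⟩, rfl⟩
    · refine ⟨?_, ?_, ?_⟩
      · rintro ⟨⟨x2, y2⟩, h2⟩ ⟨⟨⟨x1, y1⟩, h1⟩, ⟨he1, hk1⟩, ⟨he2, hk2⟩⟩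
        exact ⟨x1, he1, he2⟩
      · rintro ⟨⟨x2, y2⟩, h2⟩ ⟨⟨⟨x1, y1⟩, h1⟩, ⟨he1, hk1⟩, ⟨he2, hk2⟩⟩
          ⟨⟨x2', y2'⟩, h2'⟩ ⟨⟨⟨x1', y1'⟩, h1'⟩, ⟨he1', hk1'⟩, ⟨he2', hk2'⟩⟩ hfst
        simp only at hfst h2 h2'
        subst hfst
        have hy : y2 = y2' := (hpBij y).2.2.1 ⟨y1, hk1, hk2⟩ ⟨y1', hk1', hk2'⟩ (by
          show p y2 = p y2'; rw [← h2, ← h2'])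
        subst hy; rfl
      · rintro x2 ⟨x1, hx1, hx2⟩
        have hmem1 : f x1 ∈ Nbhd EH (p y) := by
          show EH (p y) (f x1); rw [← hxy]; exact hf _ _ hx1
        obtain ⟨y1, hy1, hpy1⟩ := (hpBij y).1.2.2 hmem1
        have hmem2 : f x2 ∈ Nbhd EH (p y1) := by
          show EH (p y1) (f x2); rw [hpy1]; exact hf _ _ hx2
        obtain ⟨y2, hy2, hpy2⟩ := (hpBij y1).1.2.2 hmem2
        exact ⟨⟨⟨x2, y2⟩, hpy2.symm⟩, ⟨⟨⟨x1, y1⟩, hpy1.symm⟩, ⟨hx1, hy1⟩, ⟨hx2, hy2⟩⟩, rfl⟩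
end

section
/- The equivalence relation on paths generated by conditions (i) and (ii)' coincides with the 2-homotopy relation generated by (i) and (ii), where (ii)' requires l(φ)=l(ψ) and φ(i)=ψ(i) for all i except possibly one index x. -/
/-- A path of length `len` in a graph with edge relation `E`, from `v` to `w`:
a graph homomorphism `L_len → G`. Values of `toFun` beyond `len` are irrelevant. -/
structure GPath {V : Type*} (E : V → V → Prop) (v w : V) where
  len : ℕ
  toFun : ℕ → V
  src : toFun 0 = v
  tgt : toFun len = w
  adj : ∀ i < len, E (toFun i) (toFun (i + 1))

/-- Generating relation of 2-homotopy of paths: (i) insertion of a back-and-forth step,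
or (ii) equal lengths with `φ × ψ` sending edges of `L_n` to edges of `G`. -/
def HtpyStep {V : Type*} (E : V → V → Prop) {v w : V} (φ ψ : GPath E v w) : Prop :=
  (φ.len + 2 = ψ.len ∧ ∃ x ≤ φ.len,
      (∀ i ≤ x, φ.toFun i = ψ.toFun i) ∧ ∀ i, x ≤ i → i ≤ φ.len → φ.toFun i = ψ.toFun (i + 2)) ∨
  (φ.len = ψ.len ∧ ∀ i < φ.len,
      E (φ.toFun i) (ψ.toFun (i + 1)) ∧ E (φ.toFun (i + 1)) (ψ.toFun i))

/-- 2-homotopy of paths: the equivalence relation generated by `HtpyStep`. -/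
def Htpy {V : Type*} (E : V → V → Prop) {v w : V} : GPath E v w → GPath E v w → Prop :=
  Relation.EqvGen (HtpyStep E)

/-- Concatenation of paths: `ψ` first (from `u` to `v`), then `φ` (from `v` to `w`). -/
def GPath.comp {V : Type*} {E : V → V → Prop} {u v w : V}
    (φ : GPath E v w) (ψ : GPath E u v) : GPath E u w where
  len := ψ.len + φ.len
  toFun := fun i => if i < ψ.len then ψ.toFun i else φ.toFun (i - ψ.len)
  src := by
    by_cases h : 0 < ψ.len
    · simpa [h] using ψ.src
    · have h0 : ψ.len = 0 := by omega
      have h1 : u = v := by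
        have ht := ψ.tgt
        rw [h0] at ht
        rw [← ψ.src]
        exact ht
      simp [h, h0, φ.src, h1]
  tgt := by
    have h : ¬ (ψ.len + φ.len < ψ.len) := by omega
    simp [h, φ.tgt]
  adj := by
    intro i hi
    by_cases h1 : i + 1 < ψ.len
    · have h0 : i < ψ.len := by omega
      simpa [h0, h1] using ψ.adj i h0
    · by_cases h0 : i < ψ.len
      · have he : i + 1 = ψ.len := by omega
        have : φ.toFun (i + 1 - ψ.len) = ψ.toFun (i + 1) := by
          rw [he, Nat.sub_self, φ.src, ψ.tgt]
        simp only [h0, h1, if_pos, if_neg, not_false_iff]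
        rw [this]
        exact ψ.adj i h0
      · have hh : ¬ (i + 1 < ψ.len) := h1
        have hs : i + 1 - ψ.len = (i - ψ.len) + 1 := by omega
        simp only [h0, hh, if_neg, not_false_iff]
        rw [hs]
        exact φ.adj (i - ψ.len) (by omega)

/-- The image of a path under a graph homomorphism. -/
def GPath.map {V W : Type*} {E : V → V → Prop} {F : W → W → Prop} {v w : V}
    (p : V → W) (hp : ∀ x y, E x y → F (p x) (p y)) (φ : GPath E v w) :
    GPath F (p v) (p w) where
  len := φ.len
  toFun := fun i => p (φ.toFun i)
  src := by simp [φ.src]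
  tgt := by simp [φ.tgt]
  adj := fun i hi => hp _ _ (φ.adj i hi)

/-- The constant path of length 0. -/
def GPath.const {V : Type*} (E : V → V → Prop) (v : V) : GPath E v v :=
  ⟨0, fun _ => v, rfl, rfl, fun i h => absurd h (Nat.not_lt_zero i)⟩

/-- The alternative generating relation: (i) as in `HtpyStep`, or (ii)'
equal lengths and the two paths differ at at most one vertex. -/
def HtpyStep' {V : Type*} (E : V → V → Prop) {v w : V} (φ ψ : GPath E v w) : Prop :=
  (φ.len + 2 = ψ.len ∧ ∃ x ≤ φ.len,
      (∀ i ≤ x, φ.toFun i = ψ.toFun i) ∧ ∀ i, x ≤ i → i ≤ φ.len → φ.toFun i = ψ.toFun (i + 2)) ∨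
  (φ.len = ψ.len ∧ ∃ x, ∀ i ≤ φ.len, i ≠ x → φ.toFun i = ψ.toFun i)

/-- Intermediate path: follow `ψ` up to (but not including) index `k`, then `φ`. -/
def midPath {V : Type*} {E : V → V → Prop} {v w : V} (φ ψ : GPath E v w)
    (hlen : φ.len = ψ.len)
    (hk : ∀ i < φ.len, E (ψ.toFun i) (φ.toFun (i + 1))) (k : ℕ) : GPath E v w where
  len := φ.len
  toFun := fun i => if i < k then ψ.toFun i else φ.toFun i
  src := by
    by_cases h : 0 < k
    · simp [h, ψ.src]
    · simp [h, φ.src]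
  tgt := by
    by_cases h : φ.len < k
    · simp only [h, if_pos]
      rw [hlen]
      exact ψ.tgt
    · simp [h, φ.tgt]
  adj := by
    intro i hi
    by_cases h1 : i + 1 < k
    · have h0 : i < k := by omega
      simp only [h0, h1, if_pos]
      exact ψ.adj i (hlen ▸ hi)
    · by_cases h0 : i < k
      · simp only [h0, h1, if_pos, if_neg, not_false_iff]
        exact hk i hi
      · simp only [h0, h1, if_neg, not_false_iff]
        exact φ.adj i hi

lemma htpyStep2_eqvGen {V : Type*} {E : V → V → Prop}
    (hsymm : ∀ x y, E x y → E y x) {v w : V} (φ ψ : GPath E v w)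
    (hlen : φ.len = ψ.len)
    (hc : ∀ i < φ.len, E (φ.toFun i) (ψ.toFun (i + 1)) ∧ E (φ.toFun (i + 1)) (ψ.toFun i)) :
    Relation.EqvGen (HtpyStep' E) φ ψ := by
  have hk : ∀ i < φ.len, E (ψ.toFun i) (φ.toFun (i + 1)) :=
    fun i hi => hsymm _ _ (hc i hi).2
  have key : ∀ k : ℕ, Relation.EqvGen (HtpyStep' E) φ (midPath φ ψ hlen hk k) := by
    intro k
    induction k with
    | zero =>
      apply Relation.EqvGen.rel
      right
      exact ⟨rfl, 0, fun i _ _ => by simp [midPath]⟩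
    | succ k ih =>
      refine Relation.EqvGen.trans _ _ _ ih (Relation.EqvGen.rel _ _ ?_)
      right
      refine ⟨rfl, k, fun i _ hik => ?_⟩
      have : i < k ↔ i < k + 1 := by omega
      simp [midPath, this]
  refine Relation.EqvGen.trans _ _ _ (key (φ.len + 1)) (Relation.EqvGen.rel _ _ ?_)
  right
  refine ⟨hlen, φ.len + 1, fun i hi _ => ?_⟩
  have : i < φ.len + 1 := Nat.lt_succ_of_le hi
  simp [midPath, this]
  intro h
  omega

lemma htpyStep'_to_htpyStep {V : Type*} {E : V → V → Prop}
    (hsymm : ∀ x y, E x y → E y x) {v w : V} {φ ψ : GPath E v w}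
    (h : HtpyStep' E φ ψ) : HtpyStep E φ ψ := by
  rcases h with h | ⟨hlen, x, hx⟩
  · exact Or.inl h
  · refine Or.inr ⟨hlen, fun i hi => ?_⟩
    constructor
    · by_cases h1 : i + 1 = x
      · have h0 : φ.toFun i = ψ.toFun i := hx i (by omega) (by omega)
        rw [h0]
        exact ψ.adj i (hlen ▸ hi)
      · rw [← hx (i + 1) (by omega) h1]
        exact φ.adj i hi
    · by_cases h1 : i = x
      · have h0 : φ.toFun (i + 1) = ψ.toFun (i + 1) := hx (i + 1) (by omega) (by omega)
        rw [h0]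
        exact hsymm _ _ (ψ.adj i (hlen ▸ hi))
      · rw [← hx i (by omega) h1]
        exact hsymm _ _ (φ.adj i hi)

/-- the equivalence relation generated by (i) and (ii)' coincides with
the 2-homotopy relation generated by (i) and (ii). -/
theorem eqvGen_htpyStep'_iff_htpy {V : Type*} (E : V → V → Prop)
    (hsymm : ∀ x y, E x y → E y x) {v w : V} (φ ψ : GPath E v w) :
    Relation.EqvGen (HtpyStep' E) φ ψ ↔ Htpy E φ ψ := by
  constructor
  · exact Relation.EqvGen.mono (fun (a b : GPath E v w) h => htpyStep'_to_htpyStep hsymm h) φ ψ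
  · intro h
    induction h with
    | rel a b hab =>
      rcases hab with h | ⟨hlen, hc⟩
      · exact Relation.EqvGen.rel _ _ (Or.inl h)
      · exact htpyStep2_eqvGen hsymm a b hlen hc
    | refl a => exact Relation.EqvGen.refl a
    | symm a b _ ih => exact Relation.EqvGen.symm a b ih
    | trans a b c _ _ ih1 ih2 => exact Relation.EqvGen.trans a b c ih1 ih2
end

section
/- Path lifting respects 2-homotopy: let p : (G,v) → (H,w) be a based 2-covering map and φ, ψ paths in H starting at w with φ ≃ ψ (2-homotopic). Then the unique lifts φ̃, ψ̃ starting at v have the same terminal point, and φ̃ ≃ ψ̃. -/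
section Aux

variable {VG VH : Type*} {E : VG → VG → Prop} {F : VH → VH → Prop} {p : VG → VH}

lemma lift_eq_on (hp : IsTwoCovering E F p) {v a b : VG}
    (φ' : GPath E v a) (ψ' : GPath E v b) (x : ℕ)
    (hx1 : x ≤ φ'.len) (hx2 : x ≤ ψ'.len)
    (hagree : ∀ i ≤ x, p (φ'.toFun i) = p (ψ'.toFun i)) :
    ∀ i ≤ x, φ'.toFun i = ψ'.toFun i := by
  intro i hi
  induction i with
  | zero => rw [φ'.src, ψ'.src]
  | succ k ihk =>
    have hk := ihk (Nat.le_of_succ_le hi)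
    have h1 : E (φ'.toFun k) (φ'.toFun (k+1)) := φ'.adj k (by omega)
    have h2 : E (φ'.toFun k) (ψ'.toFun (k+1)) := by
      rw [hk]; exact ψ'.adj k (by omega)
    exact (hp.2 (φ'.toFun k)).1.2.1 h1 h2 (hagree (k+1) hi)

lemma lift_exists (hp : IsTwoCovering E F p) (v : VG) {u : VH}
    (φ : GPath F (p v) u) :
    ∃ (a : VG) (φ' : GPath E v a), φ'.len = φ.len ∧
      ∀ i ≤ φ.len, p (φ'.toFun i) = φ.toFun i := by
  have key : ∀ n, n ≤ φ.len → ∃ g : ℕ → VG, g 0 = v ∧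
      (∀ i ≤ n, p (g i) = φ.toFun i) ∧ ∀ i < n, E (g i) (g (i+1)) := by
    intro n
    induction n with
    | zero =>
      intro _
      refine ⟨fun _ => v, rfl, ?_, fun i h => absurd h (Nat.not_lt_zero i)⟩
      intro i hi
      have : i = 0 := by omega
      subst this
      rw [φ.src]
    | succ n ihn =>
      intro hn
      obtain ⟨g, hg0, hgp, hge⟩ := ihn (by omega)
      have hF : F (φ.toFun n) (φ.toFun (n+1)) := φ.adj n (by omega)
      have hmem : φ.toFun (n+1) ∈ Nbhd F (p (g n)) := by
        rw [hgp n le_rfl]; exact hF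
      obtain ⟨z, hz, hpz⟩ := (hp.2 (g n)).1.2.2 hmem
      refine ⟨Function.update g (n+1) z, ?_, ?_, ?_⟩
      · rw [Function.update_of_ne (by omega), hg0]
      · intro i hi
        rcases Nat.lt_or_ge i (n+1) with h | h
        · rw [Function.update_of_ne (by omega)]; exact hgp i (by omega)
        · have : i = n+1 := by omega
          subst this
          rw [Function.update_self]; exact hpz
      · intro i hi
        rcases Nat.lt_or_ge i n with h | h
        · rw [Function.update_of_ne (by omega), Function.update_of_ne (by omega)]
          exact hge i h
        · have : i = n := by omega
          subst this
          rw [Function.update_of_ne (by omega), Function.update_self]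
          exact hz
  obtain ⟨g, hg0, hgp, hge⟩ := key φ.len le_rfl
  exact ⟨g φ.len, ⟨φ.len, g, hg0, rfl, hge⟩, rfl, hgp⟩

lemma htpy_of_agree (hEsymm : ∀ x y, E x y → E y x) {v a : VG}
    (φ' ψ' : GPath E v a) (hlen : φ'.len = ψ'.len)
    (hag : ∀ i ≤ φ'.len, φ'.toFun i = ψ'.toFun i) :
    Htpy E φ' ψ' := by
  refine Relation.EqvGen.rel _ _ (Or.inr ⟨hlen, fun i hi => ⟨?_, ?_⟩⟩)
  · rw [← hag (i+1) hi]; exact φ'.adj i hi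
  · rw [← hag i (le_of_lt hi)]; exact hEsymm _ _ (φ'.adj i hi)

lemma step_lift (hEsymm : ∀ x y, E x y → E y x) (hFsymm : ∀ x y, F x y → F y x)
    (hp : IsTwoCovering E F p) (v : VG) {u : VH}
    (φ ψ : GPath F (p v) u) (hstep : HtpyStep F φ ψ)
    {a b : VG} (φ' : GPath E v a) (ψ' : GPath E v b)
    (hφ : φ'.len = φ.len ∧ ∀ i ≤ φ.len, p (φ'.toFun i) = φ.toFun i)
    (hψ : ψ'.len = ψ.len ∧ ∀ i ≤ ψ.len, p (ψ'.toFun i) = ψ.toFun i) :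
    a = b ∧ ∀ hab : a = b, Htpy E (hab ▸ φ') ψ' := by
  obtain ⟨hlen1, hlift1⟩ := hφ
  obtain ⟨hlen2, hlift2⟩ := hψ
  rcases hstep with ⟨hlc, x, hx, h1, h2⟩ | ⟨hlc, hladder⟩
  · -- insertion case
    have agree_low : ∀ i ≤ x, φ'.toFun i = ψ'.toFun i := by
      refine lift_eq_on hp φ' ψ' x (by omega) (by omega) ?_
      intro i hi
      rw [hlift1 i (by omega), hlift2 i (by omega), h1 i hi]
    have back : ψ'.toFun (x+2) = ψ'.toFun x := by
      have e1 : E (ψ'.toFun (x+1)) (ψ'.toFun (x+2)) := ψ'.adj (x+1) (by omega)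
      have e2 : E (ψ'.toFun (x+1)) (ψ'.toFun x) := hEsymm _ _ (ψ'.adj x (by omega))
      have heq : p (ψ'.toFun (x+2)) = p (ψ'.toFun x) := by
        rw [hlift2 (x+2) (by omega), hlift2 x (by omega), ← h2 x le_rfl hx, h1 x le_rfl]
      exact (hp.2 (ψ'.toFun (x+1))).1.2.1 e1 e2 heq
    have agree_high : ∀ i, x ≤ i → i ≤ φ.len → φ'.toFun i = ψ'.toFun (i+2) := by
      intro i hxi
      induction i, hxi using Nat.le_induction with
      | base =>
        intro _
        rw [agree_low x le_rfl, back]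
      | succ n hn ih =>
        intro hn1
        have ih' := ih (by omega)
        have e1 : E (φ'.toFun n) (φ'.toFun (n+1)) := φ'.adj n (by omega)
        have e2 : E (φ'.toFun n) (ψ'.toFun (n+1+2)) := by
          rw [ih']
          have := ψ'.adj (n+2) (by omega)
          rw [show n+2+1 = n+1+2 from by omega] at this
          exact this
        have heq : p (φ'.toFun (n+1)) = p (ψ'.toFun (n+1+2)) := by
          rw [hlift1 (n+1) (by omega), hlift2 (n+1+2) (by omega), h2 (n+1) (by omega) (by omega)]
        exact (hp.2 (φ'.toFun n)).1.2.1 e1 e2 heq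
    have hab : a = b := by
      have h3 := agree_high φ.len hx le_rfl
      rw [← φ'.tgt, ← ψ'.tgt, show φ'.len = φ.len from hlen1,
        show ψ'.len = φ.len + 2 from by omega, h3]
    refine ⟨hab, ?_⟩
    subst hab
    intro h
    show Htpy E φ' ψ'
    refine Relation.EqvGen.rel _ _ (Or.inl ⟨by omega, x, by omega, ?_, ?_⟩)
    · intro i hi; exact agree_low i hi
    · intro i hxi hi
      exact agree_high i hxi (by omega)
  · -- ladder case
    have lad : ∀ i, i < φ.len →
        E (φ'.toFun i) (ψ'.toFun (i+1)) ∧ E (φ'.toFun (i+1)) (ψ'.toFun i) := by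
      intro i
      induction i with
      | zero =>
        intro h0
        constructor
        · rw [φ'.src]
          have hb := ψ'.adj 0 (by omega)
          rw [ψ'.src] at hb
          exact hb
        · rw [ψ'.src]
          have hb := hEsymm _ _ (φ'.adj 0 (by omega))
          rw [φ'.src] at hb
          exact hb
      | succ k ihk =>
        intro hk1
        have ihk' := ihk (by omega)
        have e1 : E (φ'.toFun (k+1)) (ψ'.toFun (k+1+1)) := by
          have hF1 : F (φ.toFun (k+1)) (ψ.toFun (k+2)) := (hladder (k+1) hk1).1
          have hmem : ψ.toFun (k+2) ∈ Nbhd F (p (φ'.toFun (k+1))) := by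
            rw [hlift1 (k+1) (by omega)]; exact hF1
          obtain ⟨z, hz, hpz⟩ := (hp.2 (φ'.toFun (k+1))).1.2.2 hmem
          have hz2 : z ∈ Nbhd2 E (ψ'.toFun k) := ⟨φ'.toFun (k+1), hEsymm _ _ ihk'.2, hz⟩
          have hw2 : ψ'.toFun (k+2) ∈ Nbhd2 E (ψ'.toFun k) :=
            ⟨ψ'.toFun (k+1), ψ'.adj k (by omega), ψ'.adj (k+1) (by omega)⟩
          have heq : p z = p (ψ'.toFun (k+2)) := by
            rw [hpz, hlift2 (k+2) (by omega)]
          have hzz := (hp.2 (ψ'.toFun k)).2.2.1 hz2 hw2 heq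
          rw [← hzz]
          exact hz
        have e2 : E (φ'.toFun (k+1+1)) (ψ'.toFun (k+1)) := by
          have hF2 : F (ψ.toFun (k+1)) (φ.toFun (k+2)) := hFsymm _ _ (hladder (k+1) hk1).2
          have hmem : φ.toFun (k+2) ∈ Nbhd F (p (ψ'.toFun (k+1))) := by
            rw [hlift2 (k+1) (by omega)]; exact hF2
          obtain ⟨z, hz, hpz⟩ := (hp.2 (ψ'.toFun (k+1))).1.2.2 hmem
          have hz2 : z ∈ Nbhd2 E (φ'.toFun k) := ⟨ψ'.toFun (k+1), ihk'.1, hz⟩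
          have hw2 : φ'.toFun (k+2) ∈ Nbhd2 E (φ'.toFun k) :=
            ⟨φ'.toFun (k+1), φ'.adj k (by omega), φ'.adj (k+1) (by omega)⟩
          have heq : p z = p (φ'.toFun (k+2)) := by
            rw [hpz, hlift1 (k+2) (by omega)]
          have hzz := (hp.2 (φ'.toFun k)).2.2.1 hz2 hw2 heq
          rw [← hzz]
          exact hEsymm _ _ hz
        exact ⟨e1, e2⟩
    have hab : a = b := by
      rcases Nat.eq_zero_or_pos φ.len with h0 | hpos
      · have ha : a = v := by rw [← φ'.tgt, show φ'.len = 0 from by omega, φ'.src]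
        have hb : b = v := by rw [← ψ'.tgt, show ψ'.len = 0 from by omega, ψ'.src]
        rw [ha, hb]
      · obtain ⟨m, hm⟩ : ∃ m, φ.len = m + 1 := ⟨φ.len - 1, by omega⟩
        have l1 : E (φ'.toFun m) (ψ'.toFun (m+1)) := (lad m (by omega)).1
        have l2 : E (φ'.toFun m) (φ'.toFun (m+1)) := φ'.adj m (by omega)
        have heq : p (φ'.toFun (m+1)) = p (ψ'.toFun (m+1)) := by
          rw [hlift1 (m+1) (by omega), hlift2 (m+1) (by omega),
            show m+1 = φ.len from hm.symm, φ.tgt, show φ.len = ψ.len from hlc, ψ.tgt]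
        have hend := (hp.2 (φ'.toFun m)).1.2.1 l2 l1 heq
        rw [← φ'.tgt, ← ψ'.tgt, show φ'.len = m+1 from by omega,
          show ψ'.len = m+1 from by omega, hend]
    refine ⟨hab, ?_⟩
    subst hab
    intro h
    show Htpy E φ' ψ'
    exact Relation.EqvGen.rel _ _ (Or.inr ⟨by omega, fun i hi => lad i (by omega)⟩)

end Aux

/-- path lifting respects 2-homotopy: lifts (starting at `v`) of
2-homotopic paths of `H` have the same terminal point and are 2-homotopic. -/
theorem two_covering_lift_htpy {VG VH : Type*}
    (E : VG → VG → Prop) (F : VH → VH → Prop)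
    (hEsymm : ∀ x y, E x y → E y x) (hFsymm : ∀ x y, F x y → F y x)
    (p : VG → VH) (hp : IsTwoCovering E F p) (v : VG) {u : VH}
    (φ ψ : GPath F (p v) u) (h : Htpy F φ ψ)
    {a b : VG} (φ' : GPath E v a) (ψ' : GPath E v b)
    (hφ : φ'.len = φ.len ∧ ∀ i ≤ φ.len, p (φ'.toFun i) = φ.toFun i)
    (hψ : ψ'.len = ψ.len ∧ ∀ i ≤ ψ.len, p (ψ'.toFun i) = ψ.toFun i) :
    a = b ∧ ∀ hab : a = b, Htpy E (hab ▸ φ') ψ' := by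
  revert hφ hψ
  revert φ' ψ'
  revert a b
  induction h with
  | rel φ ψ hstep =>
    exact fun {a b} φ' ψ' hφ hψ => step_lift hEsymm hFsymm hp v φ ψ hstep φ' ψ' hφ hψ
  | refl φ =>
    intro a b φ' ψ' hφ hψ
    obtain ⟨hlen1, hlift1⟩ := hφ
    obtain ⟨hlen2, hlift2⟩ := hψ
    have hag : ∀ i ≤ φ.len, φ'.toFun i = ψ'.toFun i := by
      refine lift_eq_on hp φ' ψ' φ.len (by omega) (by omega) ?_
      intro i hi
      rw [hlift1 i hi, hlift2 i hi]
    have hab : a = b := by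
      rw [← φ'.tgt, ← ψ'.tgt, hlen1, hlen2, hag φ.len le_rfl]
    refine ⟨hab, ?_⟩
    subst hab
    intro h
    show Htpy E φ' ψ'
    exact htpy_of_agree hEsymm φ' ψ' (by omega) (fun i hi => hag i (by omega))
  | symm φ ψ hh ih =>
    intro a b φ' ψ' hφ hψ
    obtain ⟨hba, hrest⟩ := ih ψ' φ' hψ hφ
    subst hba
    exact ⟨rfl, fun hab => Relation.EqvGen.symm _ _ (hrest rfl)⟩
  | trans φ χ ψ h1 h2 ih1 ih2 =>
    intro a b φ' ψ' hφ hψ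
    obtain ⟨c, χ', hχlen, hχlift⟩ := lift_exists hp v χ
    obtain ⟨hac, hr1⟩ := ih1 φ' χ' hφ ⟨hχlen, hχlift⟩
    obtain ⟨hcb, hr2⟩ := ih2 χ' ψ' ⟨hχlen, hχlift⟩ hψ
    subst hac
    subst hcb
    exact ⟨rfl, fun hab => Relation.EqvGen.trans _ _ _ (hr1 rfl) (hr2 rfl)⟩
end

section
/- For a based 2-covering map p : (G,v) → (H,w), the induced homomorphism p_* : π₁²(G,v) → π₁²(H,w) on 2-fundamental groups is injective. Moreover, a class [φ] ∈ π₁²(H,w) lies in the image of p_* if and only if the lift of φ starting at v is a loop at v. -/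
section TCAux

variable {VG VH : Type*} {E : VG → VG → Prop} {F : VH → VH → Prop} {p : VG → VH}

lemma GPath.ext' {V : Type*} {E : V → V → Prop} {v w : V} {φ ψ : GPath E v w}
    (h1 : φ.len = ψ.len) (h2 : φ.toFun = ψ.toFun) : φ = ψ := by
  cases φ; cases ψ; dsimp at h1 h2; subst h1; subst h2; rfl

/-- change the target proof of a path -/
def tcTransfer {V : Type*} {E : V → V → Prop} {v u u' : V} (h : u = u') (Q : GPath E v u) :
    GPath E v u' :=
  ⟨Q.len, Q.toFun, Q.src, h ▸ Q.tgt, Q.adj⟩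

lemma tcTransfer_self {V : Type*} {E : V → V → Prop} {v u : V} (h : u = u) (Q : GPath E v u) :
    tcTransfer h Q = Q := GPath.ext' rfl rfl

lemma tc_surj (hp : IsTwoCovering E F p) {a : VG} {b : VH} (h : F (p a) b) :
    ∃ u, E a u ∧ p u = b := by
  obtain ⟨u, hu, hpu⟩ := (hp.2 a).1.surjOn h
  exact ⟨u, hu, hpu⟩

lemma tc_injN (hp : IsTwoCovering E F p) {a b c : VG} (hb : E a b) (hc : E a c)
    (h : p b = p c) : b = c := (hp.2 a).1.injOn hb hc h

lemma tc_injN2 (hp : IsTwoCovering E F p) {a b c : VG} (hb : b ∈ Nbhd2 E a)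
    (hc : c ∈ Nbhd2 E a) (h : p b = p c) : b = c := (hp.2 a).2.injOn hb hc h

open Classical in
noncomputable def liftFun (E : VG → VG → Prop) (p : VG → VH) (f : ℕ → VH) (v₀ : VG) : ℕ → VG
  | 0 => v₀
  | (i+1) =>
    if h : ∃ u, E (liftFun E p f v₀ i) u ∧ p u = f (i+1) then h.choose else liftFun E p f v₀ i

lemma liftFun_prop (hp : IsTwoCovering E F p) (f : ℕ → VH) (n : ℕ) {v₀ : VG}
    (hv : p v₀ = f 0) (hadj : ∀ i < n, F (f i) (f (i + 1))) :
    (∀ i ≤ n, p (liftFun E p f v₀ i) = f i) ∧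
      (∀ i < n, E (liftFun E p f v₀ i) (liftFun E p f v₀ (i + 1))) := by
  have key : ∀ i ≤ n, p (liftFun E p f v₀ i) = f i := by
    intro i hi
    induction i with
    | zero => exact hv
    | succ j ih =>
      have hj : j ≤ n := by omega
      have hF : F (p (liftFun E p f v₀ j)) (f (j + 1)) := by
        rw [ih hj]; exact hadj j (by omega)
      have hex := tc_surj hp hF
      show p (liftFun E p f v₀ (j + 1)) = f (j + 1)
      rw [liftFun, dif_pos hex]
      exact hex.choose_spec.2
  refine ⟨key, fun i hi => ?_⟩
  have hF : F (p (liftFun E p f v₀ i)) (f (i + 1)) := by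
    rw [key i hi.le]; exact hadj i hi
  have hex := tc_surj hp hF
  show E (liftFun E p f v₀ i) (liftFun E p f v₀ (i + 1))
  rw [liftFun, dif_pos hex]
  exact hex.choose_spec.1

lemma lift_unique (hp : IsTwoCovering E F p) (f : ℕ → VH) (n : ℕ) (g g' : ℕ → VG)
    (h0 : g 0 = g' 0) (hg : ∀ i ≤ n, p (g i) = f i) (hg' : ∀ i ≤ n, p (g' i) = f i)
    (he : ∀ i < n, E (g i) (g (i + 1))) (he' : ∀ i < n, E (g' i) (g' (i + 1))) :
    ∀ i ≤ n, g i = g' i := by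
  intro i hi
  induction i with
  | zero => exact h0
  | succ j ih =>
    have hj : j ≤ n := by omega
    have heq := ih hj
    refine tc_injN hp (he j (by omega)) (heq ▸ he' j (by omega)) ?_
    rw [hg (j+1) hi, hg' (j+1) hi]

end TCAux
section TCAux2

variable {VG VH : Type*} {E : VG → VG → Prop} {F : VH → VH → Prop} {p : VG → VH}

lemma htpy_of_agree_s15 {V : Type*} {E : V → V → Prop} (hs : ∀ x y, E x y → E y x)
    {v w : V} (φ ψ : GPath E v w) (h1 : φ.len = ψ.len)
    (h2 : ∀ i ≤ φ.len, φ.toFun i = ψ.toFun i) : Htpy E φ ψ := by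
  refine Relation.EqvGen.rel _ _ (Or.inr ⟨h1, fun i hi => ⟨?_, ?_⟩⟩)
  · rw [← h2 (i + 1) hi]; exact φ.adj i hi
  · rw [← h2 i hi.le]; exact hs _ _ (φ.adj i hi)

lemma step_lift_s15 (hp : IsTwoCovering E F p) (hEsymm : ∀ x y, E x y → E y x)
    (hFsymm : ∀ x y, F x y → F y x) {w w' : VH} {φ' ψ' : GPath F w w'}
    (hs : HtpyStep F φ' ψ') {v₀ : VG} (hv : p v₀ = w) :
    liftFun E p φ'.toFun v₀ φ'.len = liftFun E p ψ'.toFun v₀ ψ'.len ∧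
    ((φ'.len + 2 = ψ'.len ∧ ∃ x ≤ φ'.len,
        (∀ i ≤ x, liftFun E p φ'.toFun v₀ i = liftFun E p ψ'.toFun v₀ i) ∧
        ∀ i, x ≤ i → i ≤ φ'.len →
          liftFun E p φ'.toFun v₀ i = liftFun E p ψ'.toFun v₀ (i + 2)) ∨
     (φ'.len = ψ'.len ∧ ∀ i < φ'.len,
        E (liftFun E p φ'.toFun v₀ i) (liftFun E p ψ'.toFun v₀ (i + 1)) ∧
        E (liftFun E p φ'.toFun v₀ (i + 1)) (liftFun E p ψ'.toFun v₀ i))) := by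
  set g := liftFun E p φ'.toFun v₀ with hgdef
  set h := liftFun E p ψ'.toFun v₀ with hhdef
  obtain ⟨hg1, hg2⟩ := liftFun_prop hp φ'.toFun φ'.len (hv.trans φ'.src.symm) φ'.adj
  obtain ⟨hh1, hh2⟩ := liftFun_prop hp ψ'.toFun ψ'.len (hv.trans ψ'.src.symm) ψ'.adj
  have g0 : g 0 = v₀ := rfl
  have h0 : h 0 = v₀ := rfl
  rcases hs with ⟨hlen, x, hx, heqv, hsh⟩ | ⟨hlen, hcross⟩
  · -- insertion of a back-and-forth step
    have hxelt : ∀ i ≤ x, g i = h i := by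
      refine lift_unique hp φ'.toFun x g h (g0.trans h0.symm)
        (fun i hi => hg1 i (by omega)) (fun i hi => ?_)
        (fun i hi => hg2 i (by omega)) (fun i hi => hh2 i (by omega))
      rw [hh1 i (by omega)]
      exact (heqv i hi).symm
    have e1 : E (h x) (h (x + 1)) := hh2 x (by omega)
    have e2 : E (h (x + 1)) (h (x + 2)) := hh2 (x + 1) (by omega)
    have hx2 : h (x + 2) = g x := by
      have : h (x + 2) = h x :=
        tc_injN2 hp ⟨h (x + 1), e1, e2⟩ ⟨h (x + 1), e1, hEsymm _ _ e1⟩ (by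
          rw [hh1 (x + 2) (by omega), hh1 x (by omega), ← hsh x le_rfl hx, ← heqv x le_rfl])
      rw [this, ← hxelt x le_rfl]
    have hstep : ∀ i, x ≤ i → i ≤ φ'.len → g i = h (i + 2) := by
      refine Nat.le_induction (fun _ => hx2.symm) ?_
      intro i hxi ih hi1
      have ihv := ih (by omega)
      have eg : E (g i) (g (i + 1)) := hg2 i (by omega)
      have eh : E (g i) (h (i + 3)) := ihv ▸ hh2 (i + 2) (by omega)
      refine tc_injN hp eg eh ?_
      rw [hg1 (i + 1) (by omega), hh1 (i + 3) (by omega)]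
      exact hsh (i + 1) (by omega) hi1
    refine ⟨?_, Or.inl ⟨hlen, x, hx, hxelt, hstep⟩⟩
    have := hstep φ'.len hx le_rfl
    rw [this]
    congr 1
  · -- cross adjacency case
    have hcr : ∀ i < φ'.len, E (g i) (h (i + 1)) ∧ E (g (i + 1)) (h i) := by
      intro i
      induction i with
      | zero =>
        intro hi0
        constructor
        · show E (g 0) (h 1)
          rw [g0, ← h0]
          exact hh2 0 (by omega)
        · show E (g 1) (h 0)
          rw [h0, ← g0]
          exact hEsymm _ _ (hg2 0 hi0)
      | succ i ih =>
        intro hi1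
        obtain ⟨a, b⟩ := ih (by omega)
        constructor
        · have hF : F (p (g (i + 1))) (ψ'.toFun (i + 2)) := by
            rw [hg1 (i + 1) (by omega)]
            exact (hcross (i + 1) hi1).1
          obtain ⟨u, hu, hpu⟩ := tc_surj hp hF
          have : u = h (i + 2) :=
            tc_injN2 hp ⟨g (i + 1), hg2 i (by omega), hu⟩
              ⟨h (i + 1), a, hh2 (i + 1) (by omega)⟩
              (by rw [hpu, hh1 (i + 2) (by omega)])
          exact this ▸ hu
        · have hF : F (p (h (i + 1))) (φ'.toFun (i + 2)) := by
            rw [hh1 (i + 1) (by omega)]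
            exact hFsymm _ _ (hcross (i + 1) hi1).2
          obtain ⟨u, hu, hpu⟩ := tc_surj hp hF
          have : u = g (i + 2) :=
            tc_injN2 hp ⟨h (i + 1), hh2 i (by omega), hu⟩
              ⟨g (i + 1), hEsymm _ _ b, hg2 (i + 1) hi1⟩
              (by rw [hpu, hg1 (i + 2) (by omega)])
          exact hEsymm _ _ (this ▸ hu)
    refine ⟨?_, Or.inr ⟨hlen, hcr⟩⟩
    rcases Nat.eq_zero_or_pos φ'.len with hz | hpos
    · rw [hz, ← hlen, hz, g0, h0]
    · obtain ⟨m, hm⟩ : ∃ m, φ'.len = m + 1 := ⟨φ'.len - 1, by omega⟩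
      have e1 : E (g m) (g (m + 1)) := hg2 m (by omega)
      have e2 : E (g m) (h (m + 1)) := (hcr m (by omega)).1
      have : g (m + 1) = h (m + 1) := by
        refine tc_injN hp e1 e2 ?_
        rw [hg1 (m + 1) (by omega), hh1 (m + 1) (by omega)]
        rw [show m + 1 = φ'.len from hm.symm, φ'.tgt, hlen] at *
        rw [ψ'.tgt]
      rw [← hlen, hm]
      exact this

end TCAux2
section TCAux3

variable {VG VH : Type*} {E : VG → VG → Prop} {F : VH → VH → Prop} {p : VG → VH}

/-- lift of a path, as a `GPath`, ending at the canonical lift endpoint. -/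
noncomputable def LP (hp : IsTwoCovering E F p) {w w' : VH} {v₀ : VG} (hv : p v₀ = w)
    (a : GPath F w w') : GPath E v₀ (liftFun E p a.toFun v₀ a.len) where
  len := a.len
  toFun := liftFun E p a.toFun v₀
  src := rfl
  tgt := rfl
  adj := (liftFun_prop hp a.toFun a.len (hv.trans a.src.symm) a.adj).2

/-- homotopy of paths with possibly different (but equal) endpoints -/
def tcSH (E : VG → VG → Prop) (v₀ : VG) (a b : Σ u, GPath E v₀ u) : Prop :=
  ∃ h : a.1 = b.1, Htpy E (tcTransfer h a.2) b.2

lemma tcSH_refl (v₀ : VG) (a : Σ u, GPath E v₀ u) : tcSH E v₀ a a :=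
  ⟨rfl, by rw [tcTransfer_self]; exact Relation.EqvGen.refl _⟩

lemma tcSH_symm {v₀ : VG} {a b : Σ u, GPath E v₀ u} (h : tcSH E v₀ a b) : tcSH E v₀ b a := by
  obtain ⟨u1, P⟩ := a
  obtain ⟨u2, Q⟩ := b
  obtain ⟨h, hh⟩ := h
  dsimp at h
  subst h
  rw [tcTransfer_self] at hh
  exact ⟨rfl, by rw [tcTransfer_self]; exact Relation.EqvGen.symm _ _ hh⟩

lemma tcSH_trans {v₀ : VG} {a b c : Σ u, GPath E v₀ u} (h1 : tcSH E v₀ a b)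
    (h2 : tcSH E v₀ b c) : tcSH E v₀ a c := by
  obtain ⟨u1, P⟩ := a
  obtain ⟨u2, Q⟩ := b
  obtain ⟨u3, R⟩ := c
  obtain ⟨h, hh⟩ := h1
  obtain ⟨h', hh'⟩ := h2
  dsimp at h h'
  subst h; subst h'
  rw [tcTransfer_self] at hh hh'
  exact ⟨rfl, by rw [tcTransfer_self]; exact Relation.EqvGen.trans _ _ _ hh hh'⟩

lemma tcSH_to_htpy {v₀ u : VG} {a b : Σ u, GPath E v₀ u} (hsh : tcSH E v₀ a b)
    (h1 : a.1 = u) (h2 : b.1 = u) :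
    Htpy E (tcTransfer h1 a.2) (tcTransfer h2 b.2) := by
  obtain ⟨u1, P⟩ := a
  obtain ⟨u2, Q⟩ := b
  obtain ⟨h, hh⟩ := hsh
  dsimp at h h1 h2 ⊢
  subst h2; subst h1
  rw [tcTransfer_self] at hh ⊢
  rw [tcTransfer_self]
  exact hh

lemma htpy_lift (hp : IsTwoCovering E F p) (hEsymm : ∀ x y, E x y → E y x)
    (hFsymm : ∀ x y, F x y → F y x) {w w' : VH} {v₀ : VG} (hv : p v₀ = w)
    {φ' ψ' : GPath F w w'} (hh : Htpy F φ' ψ') :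
    tcSH E v₀ ⟨_, LP hp hv φ'⟩ ⟨_, LP hp hv ψ'⟩ := by
  induction hh with
  | rel a b hab =>
    obtain ⟨hend, hraw⟩ := step_lift_s15 hp hEsymm hFsymm hab hv
    exact ⟨hend, Relation.EqvGen.rel _ _ hraw⟩
  | refl a => exact tcSH_refl v₀ _
  | symm a b _ ih => exact tcSH_symm ih
  | trans a b c _ _ ih1 ih2 => exact tcSH_trans ih1 ih2

end TCAux3
/-- for a based 2-covering map `p : (G,v) → (H, p v)`, the induced map on
2-fundamental groups is injective, and a loop class of `H` at `p v` lies in the image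
iff its lift starting at `v` is a loop at `v`. -/
theorem two_covering_pi2_injective {VG VH : Type*}
    (E : VG → VG → Prop) (F : VH → VH → Prop)
    (hEsymm : ∀ x y, E x y → E y x) (hFsymm : ∀ x y, F x y → F y x)
    (p : VG → VH) (hp : IsTwoCovering E F p) (v : VG) :
    (∀ φ ψ : GPath E v v, Htpy F (φ.map p hp.1) (ψ.map p hp.1) → Htpy E φ ψ) ∧
      ∀ φ : GPath F (p v) (p v),
        (∃ ψ : GPath E v v, Htpy F (ψ.map p hp.1) φ) ↔
          ∀ g : ℕ → VG, g 0 = v → (∀ i ≤ φ.len, p (g i) = φ.toFun i) →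
            (∀ i < φ.len, E (g i) (g (i + 1))) → g φ.len = v := by
  have agree : ∀ χ : GPath E v v, ∀ i ≤ χ.len,
      χ.toFun i = liftFun E p (fun j => p (χ.toFun j)) v i := by
    intro χ
    refine lift_unique hp (fun j => p (χ.toFun j)) χ.len χ.toFun _ χ.src
      (fun i _ => rfl) ?_ χ.adj ?_
    · exact (liftFun_prop hp (fun j => p (χ.toFun j)) χ.len (by simp [χ.src])
        (fun i hi => hp.1 _ _ (χ.adj i hi))).1
    · exact (liftFun_prop hp (fun j => p (χ.toFun j)) χ.len (by simp [χ.src])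
        (fun i hi => hp.1 _ _ (χ.adj i hi))).2
  constructor
  · intro φ ψ hH
    have he1 : liftFun E p (fun j => p (φ.toFun j)) v φ.len = v :=
      (agree φ φ.len le_rfl).symm.trans φ.tgt
    have he2 : liftFun E p (fun j => p (ψ.toFun j)) v ψ.len = v :=
      (agree ψ ψ.len le_rfl).symm.trans ψ.tgt
    have hS := htpy_lift hp hEsymm hFsymm (rfl : p v = p v) hH
    have hm := tcSH_to_htpy hS he1 he2
    have h1 : Htpy E φ (tcTransfer he1 (LP hp rfl (φ.map p hp.1))) :=
      htpy_of_agree_s15 hEsymm _ _ rfl (fun i hi => agree φ i hi)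
    have h2 : Htpy E ψ (tcTransfer he2 (LP hp rfl (ψ.map p hp.1))) :=
      htpy_of_agree_s15 hEsymm _ _ rfl (fun i hi => agree ψ i hi)
    exact Relation.EqvGen.trans _ _ _ h1
      (Relation.EqvGen.trans _ _ _ hm (Relation.EqvGen.symm _ _ h2))
  · intro φ
    constructor
    · rintro ⟨ψ, hψ⟩ g hg0 hgp hge
      have agreeg : ∀ i ≤ φ.len, g i = liftFun E p φ.toFun v i := by
        refine lift_unique hp φ.toFun φ.len g _ hg0 hgp ?_ hge ?_
        · exact (liftFun_prop hp φ.toFun φ.len φ.src.symm φ.adj).1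
        · exact (liftFun_prop hp φ.toFun φ.len φ.src.symm φ.adj).2
      obtain ⟨hend, -⟩ := htpy_lift hp hEsymm hFsymm (rfl : p v = p v) hψ
      calc g φ.len = liftFun E p φ.toFun v φ.len := agreeg φ.len le_rfl
        _ = liftFun E p (fun j => p (ψ.toFun j)) v ψ.len := hend.symm
        _ = ψ.toFun ψ.len := (agree ψ ψ.len le_rfl).symm
        _ = v := ψ.tgt
    · intro hloop
      obtain ⟨hl1, hl2⟩ := liftFun_prop hp φ.toFun φ.len (φ.src.symm : p v = φ.toFun 0) φ.adj
      have hend : liftFun E p φ.toFun v φ.len = v := hloop _ rfl hl1 hl2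
      exact ⟨⟨φ.len, liftFun E p φ.toFun v, rfl, hend, hl2⟩,
        htpy_of_agree_s15 hFsymm _ _ rfl (fun i hi => hl1 i hi)⟩
end

section
/- For n ≥ 4, the even part π₁²(K_n,0)_ev of the 2-fundamental group of the complete graph K_n is trivial; consequently π₁²(K_n,0) ≅ ℤ/2ℤ. -/
/-- The edge relation of the complete graph `K_n`, on vertex set `{0, …, n-1} ⊆ ℕ`. -/
def KnE (n : ℕ) (x y : ℕ) : Prop := x < n ∧ y < n ∧ x ≠ y

-- auxiliary
lemma changeOne {n : ℕ} {v w : ℕ} (φ ψ : GPath (KnE n) v w) (j : ℕ)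
    (hlen : φ.len = ψ.len)
    (h : ∀ i ≤ φ.len, i ≠ j → φ.toFun i = ψ.toFun i) :
    HtpyStep (KnE n) φ ψ := by
  refine Or.inr ⟨hlen, fun i hi => ⟨?_, ?_⟩⟩
  · by_cases hij : i + 1 = j
    · have h1 : φ.toFun i = ψ.toFun i := h i (le_of_lt hi) (by omega)
      have h2 := ψ.adj i (hlen ▸ hi)
      rw [← h1] at h2; exact h2
    · rw [← h (i+1) hi hij]
      exact φ.adj i hi
  · by_cases hij : i = j
    · have h1 : φ.toFun (i+1) = ψ.toFun (i+1) := h (i+1) hi (by omega)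
      have h2 := ψ.adj i (hlen ▸ hi)
      rw [h1]
      exact ⟨h2.2.1, h2.1, h2.2.2.symm⟩
    · rw [← h i (le_of_lt hi) hij]
      have h2 := φ.adj i hi
      exact ⟨h2.2.1, h2.1, h2.2.2.symm⟩

def Cfun (m i : ℕ) : ℕ :=
  if m ≤ i then 0 else if m % 2 = 1 ∧ i = m - 1 then 2 else i % 2

lemma Cfun_lt (m i : ℕ) : Cfun m i < 3 := by unfold Cfun; split_ifs <;> omega

lemma Cfun_adj (m : ℕ) (hm : m ≠ 1) (i : ℕ) (hi : i < m) : Cfun m i ≠ Cfun m (i+1) := by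
  unfold Cfun; split_ifs <;> omega

lemma Cfun_zero (m : ℕ) (hm : m ≠ 1) : Cfun m 0 = 0 := by
  unfold Cfun; split_ifs <;> omega

lemma Cfun_last (m : ℕ) (hm0 : m ≠ 0) (hm : m ≠ 1) : Cfun m (m-1) ≠ 0 := by
  unfold Cfun; split_ifs <;> omega

def Cpath (n : ℕ) (hn : 4 ≤ n) (m : ℕ) (hm : m ≠ 1) : GPath (KnE n) 0 0 where
  len := m
  toFun := Cfun m
  src := Cfun_zero m hm
  tgt := by simp [Cfun]
  adj := fun i hi => ⟨lt_of_lt_of_le (Cfun_lt m i) (by omega),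
    lt_of_lt_of_le (Cfun_lt m (i+1)) (by omega), Cfun_adj m hm i hi⟩

lemma exists_fresh (x y z : ℕ) : ∃ b, b < 4 ∧ b ≠ x ∧ b ≠ y ∧ b ≠ z := by
  refine ⟨if 0 ≠ x ∧ 0 ≠ y ∧ 0 ≠ z then 0 else if 1 ≠ x ∧ 1 ≠ y ∧ 1 ≠ z then 1
    else if 2 ≠ x ∧ 2 ≠ y ∧ 2 ≠ z then 2 else 3, ?_⟩
  split_ifs <;> omega

def updAt {n : ℕ} (φ : GPath (KnE n) 0 0) (j b : ℕ) (hj0 : j ≠ 0) (hjm : j < φ.len)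
    (h1 : KnE n (φ.toFun (j-1)) b) (h2 : KnE n b (φ.toFun (j+1))) : GPath (KnE n) 0 0 where
  len := φ.len
  toFun := Function.update φ.toFun j b
  src := by rw [Function.update_of_ne (Ne.symm hj0)]; exact φ.src
  tgt := by rw [Function.update_of_ne (by omega : φ.len ≠ j)]; exact φ.tgt
  adj := by
    intro i hi
    by_cases hij : i = j
    · subst hij
      rw [Function.update_self, Function.update_of_ne (by omega : i + 1 ≠ i)]
      exact h2
    · by_cases hij1 : i + 1 = j
      · rw [Function.update_of_ne hij, hij1, Function.update_self]
        have : i = j - 1 := by omega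
        rw [this]; exact h1
      · rw [Function.update_of_ne hij, Function.update_of_ne hij1]
        exact φ.adj i hi

lemma updAt_step {n : ℕ} (φ : GPath (KnE n) 0 0) (j b : ℕ) (hj0 : j ≠ 0) (hjm : j < φ.len)
    (h1 : KnE n (φ.toFun (j-1)) b) (h2 : KnE n b (φ.toFun (j+1))) :
    HtpyStep (KnE n) φ (updAt φ j b hj0 hjm h1 h2) :=
  changeOne _ _ j rfl (fun i _ hij => (Function.update_of_ne hij _ _).symm)

lemma retarget {n : ℕ} (hn : 4 ≤ n) (m : ℕ) (hm : m ≠ 1) :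
    ∀ d (φ : GPath (KnE n) 0 0), φ.len = m → (∀ i < m - d, φ.toFun i = Cfun m i) →
      Htpy (KnE n) φ (Cpath n hn m hm) := by
  intro d
  induction d with
  | zero =>
    intro φ hl hagree
    refine Relation.EqvGen.rel _ _ (changeOne φ _ (m+1) (by rw [hl]; rfl) ?_)
    intro i hi _
    rw [hl] at hi
    rcases Nat.lt_or_ge i m with h | h
    · exact hagree i (by omega)
    · have : i = m := by omega
      subst this
      have ht := φ.tgt
      rw [hl] at ht
      rw [ht]
      exact (Cpath n hn _ hm).tgt.symm
  | succ d ih =>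
    intro φ hl hagree
    by_cases hj : m - (d+1) = 0
    · refine ih φ hl ?_
      intro i hi
      have hi0 : i = 0 := by omega
      subst hi0
      rw [φ.src, Cfun_zero m hm]
    · set j := m - (d+1) with hjdef
      have hj1 : 1 ≤ j := by omega
      have hjm : j < m := by omega
      have hadjC := (Cpath n hn m hm).adj (j-1) (by omega : j - 1 < m)
      have hCj1 : Cfun m (j-1) = φ.toFun (j-1) := (hagree (j-1) (by omega)).symm
      have hj1j : j - 1 + 1 = j := by omega
      have hφadj := φ.adj j (by omega)
      by_cases hb : φ.toFun (j+1) = Cfun m j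
      · -- need a pre-move; first j+1 < m
        have hjm1 : j + 1 < m := by
          rcases Nat.lt_or_ge (j+1) m with h | h
          · exact h
          · exfalso
            have hjm' : j + 1 = m := by omega
            have h0 : φ.toFun m = 0 := by rw [← hl]; exact φ.tgt
            have hz : Cfun m j = 0 := by rw [← hb, hjm']; exact h0
            have : Cfun m (m-1) = 0 := by rw [(by omega : m - 1 = j)]; exact hz
            exact Cfun_last m (by omega) hm this
        obtain ⟨b, hb4, hbx, hby, hbz⟩ := exists_fresh (φ.toFun j) (φ.toFun (j+2)) (Cfun m j)
        have hφadj1 := φ.adj (j+1) (by omega)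
        have e1 : KnE n (φ.toFun (j+1-1)) b := by
          rw [(by omega : j + 1 - 1 = j)]
          exact ⟨hφadj.1, by omega, fun e => hbx e.symm⟩
        have e2 : KnE n b (φ.toFun (j+1+1)) := ⟨by omega, hφadj1.2.1, hby⟩
        set ψ1 := updAt φ (j+1) b (by omega) (by omega) e1 e2 with hψ1
        have step1 := updAt_step φ (j+1) b (by omega) (by omega) e1 e2
        have hψ1len : ψ1.len = m := hl
        have f1 : KnE n (ψ1.toFun (j-1)) (Cfun m j) := by
          show KnE n (Function.update φ.toFun (j+1) b (j-1)) _
          rw [Function.update_of_ne (by omega)]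
          rw [← hCj1]
          rw [hj1j] at hadjC
          exact hadjC
        have f2 : KnE n (Cfun m j) (ψ1.toFun (j+1)) := by
          show KnE n _ (Function.update φ.toFun (j+1) b (j+1))
          rw [Function.update_self]
          exact ⟨by have := Cfun_lt m j; omega, by omega, fun e => hbz e.symm⟩
        set ψ2 := updAt ψ1 j (Cfun m j) (by omega) (by omega) f1 f2 with hψ2
        have step2 := updAt_step ψ1 j (Cfun m j) (by omega) (by omega) f1 f2
        refine Relation.EqvGen.trans _ _ _ (Relation.EqvGen.rel _ _ step1)
          (Relation.EqvGen.trans _ _ _ (Relation.EqvGen.rel _ _ step2) (ih ψ2 hl ?_))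
        intro i hi
        have hi' : i ≤ j := by omega
        show Function.update ψ1.toFun j (Cfun m j) i = Cfun m i
        rcases Nat.lt_or_ge i j with h | h
        · rw [Function.update_of_ne (by omega)]
          show Function.update φ.toFun (j+1) b i = Cfun m i
          rw [Function.update_of_ne (by omega)]
          exact hagree i (by omega)
        · have : i = j := by omega
          subst this
          rw [Function.update_self]
      · have f1 : KnE n (φ.toFun (j-1)) (Cfun m j) := by
          rw [← hCj1]
          rw [hj1j] at hadjC
          exact hadjC
        have f2 : KnE n (Cfun m j) (φ.toFun (j+1)) :=
          ⟨by have := Cfun_lt m j; omega, hφadj.2.1, fun e => hb e.symm⟩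
        set ψ := updAt φ j (Cfun m j) (by omega) (by omega) f1 f2 with hψ
        have step := updAt_step φ j (Cfun m j) (by omega) (by omega) f1 f2
        refine Relation.EqvGen.trans _ _ _ (Relation.EqvGen.rel _ _ step) (ih ψ hl ?_)
        intro i hi
        show Function.update φ.toFun j (Cfun m j) i = Cfun m i
        rcases Nat.lt_or_ge i j with h | h
        · rw [Function.update_of_ne (by omega)]
          exact hagree i (by omega)
        · have : i = j := by omega
          subst this
          rw [Function.update_self]

lemma step_C' {n : ℕ} (hn : 4 ≤ n) (m : ℕ) (hm : m ≠ 1) (h2 : 2 ≤ m) (hm2 : m - 2 ≠ 1) :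
    HtpyStep (KnE n) (Cpath n hn (m-2) hm2) (Cpath n hn m hm) := by
  refine Or.inl ⟨by show m - 2 + 2 = m; omega, 0, Nat.zero_le _, ?_, ?_⟩
  · intro i hi
    have : i = 0 := by omega
    subst this
    show Cfun (m-2) 0 = Cfun m 0
    unfold Cfun; split_ifs <;> omega
  · intro i _ hi
    show Cfun (m-2) i = Cfun m (i+2)
    unfold Cfun; split_ifs <;> omega

lemma len_ne_one {n : ℕ} (φ : GPath (KnE n) 0 0) : φ.len ≠ 1 := by
  intro h
  have ha := φ.adj 0 (by omega)
  have ht := φ.tgt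
  rw [h] at ht
  rw [φ.src, show (0+1 : ℕ) = 1 from rfl, ht] at ha
  exact ha.2.2 rfl

lemma loop_to_C {n : ℕ} (hn : 4 ≤ n) (φ : GPath (KnE n) 0 0) :
    Htpy (KnE n) φ (Cpath n hn φ.len (len_ne_one φ)) :=
  retarget hn φ.len (len_ne_one φ) φ.len φ rfl (fun i hi => absurd hi (by omega))

lemma C_chain {n : ℕ} (hn : 4 ≤ n) : ∀ m, ∀ hm : m ≠ 1,
    (m % 2 = 0 → Htpy (KnE n) (Cpath n hn m hm) (Cpath n hn 0 (by omega))) ∧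
    (m % 2 = 1 → Htpy (KnE n) (Cpath n hn m hm) (Cpath n hn 3 (by omega))) := by
  intro m
  induction m using Nat.strong_induction_on with
  | _ m ih =>
    intro hm
    constructor
    · intro hpar
      rcases Nat.eq_zero_or_pos m with h0 | h0
      · subst h0
        exact Relation.EqvGen.refl _
      · have h2 : 2 ≤ m := by omega
        have hm2 : m - 2 ≠ 1 := by omega
        refine Relation.EqvGen.trans _ _ _
          (Relation.EqvGen.symm _ _ (Relation.EqvGen.rel _ _ (step_C' hn m hm h2 hm2)))
          ((ih (m-2) (by omega) hm2).1 (by omega))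
    · intro hpar
      by_cases h3 : m = 3
      · subst h3
        exact Relation.EqvGen.refl _
      · have h2 : 2 ≤ m := by omega
        have hm2 : m - 2 ≠ 1 := by omega
        refine Relation.EqvGen.trans _ _ _
          (Relation.EqvGen.symm _ _ (Relation.EqvGen.rel _ _ (step_C' hn m hm h2 hm2)))
          ((ih (m-2) (by omega) hm2).2 (by omega))

lemma C0_const {n : ℕ} (hn : 4 ≤ n) :
    HtpyStep (KnE n) (Cpath n hn 0 (by omega)) (GPath.const (KnE n) 0) := by
  refine changeOne _ _ 1 rfl ?_
  intro i hi _
  have hi : i ≤ 0 := hi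
  have : i = 0 := by omega
  subst this
  show Cfun 0 0 = 0
  unfold Cfun; simp

lemma even_to_const {n : ℕ} (hn : 4 ≤ n) (φ : GPath (KnE n) 0 0) (hev : φ.len % 2 = 0) :
    Htpy (KnE n) φ (GPath.const (KnE n) 0) :=
  Relation.EqvGen.trans _ _ _ (loop_to_C hn φ)
    (Relation.EqvGen.trans _ _ _ ((C_chain hn φ.len (len_ne_one φ)).1 hev)
      (Relation.EqvGen.rel _ _ (C0_const hn)))

lemma odd_to_C3 {n : ℕ} (hn : 4 ≤ n) (φ : GPath (KnE n) 0 0) (hod : φ.len % 2 = 1) :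
    Htpy (KnE n) φ (Cpath n hn 3 (by omega)) :=
  Relation.EqvGen.trans _ _ _ (loop_to_C hn φ)
    ((C_chain hn φ.len (len_ne_one φ)).2 hod)

lemma par_htpy {n : ℕ} {φ ψ : GPath (KnE n) 0 0} (h : Htpy (KnE n) φ ψ) :
    (φ.len : ZMod 2) = ψ.len := by
  induction h with
  | rel a b hab =>
    rcases hab with ⟨h, -⟩ | ⟨h, -⟩
    · rw [← h]
      push_cast
      rw [show (2 : ZMod 2) = 0 by decide]
      ring
    · rw [h]
  | refl => rfl
  | symm a b _ ihh => exact ihh.symm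
  | trans a b c _ _ h1 h2 => exact h1.trans h2


/-- for n ≥ 4, the even part of `π₁²(K_n, 0)` is trivial (every even
loop is 2-homotopic to the constant loop), and `π₁²(K_n, 0) ≅ ℤ/2ℤ` (there is a
bijection to `ZMod 2` turning concatenation into addition). -/
theorem pi2_complete_graph (n : ℕ) (hn : 4 ≤ n) :
    (∀ φ : GPath (KnE n) 0 0, Even φ.len → Htpy (KnE n) φ (GPath.const (KnE n) 0)) ∧
    ∃ e : Quot (Htpy (KnE n) (v := 0) (w := 0)) ≃ ZMod 2,
      ∀ φ ψ : GPath (KnE n) 0 0,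
        e (Quot.mk _ (φ.comp ψ)) = e (Quot.mk _ φ) + e (Quot.mk _ ψ) := by

  constructor
  · intro φ hev
    exact even_to_const hn φ (Nat.even_iff.mp hev)
  · refine ⟨⟨Quot.lift (fun φ => (φ.len : ZMod 2)) (fun _ _ h => par_htpy h),
      fun k => if k = 0 then Quot.mk _ (GPath.const (KnE n) 0)
        else Quot.mk _ (Cpath n hn 3 (by omega)), ?_, ?_⟩, ?_⟩
    · intro q
      induction q using Quot.ind with
      | _ φ =>
        show (if ((φ.len : ZMod 2) = 0) then _ else _) = Quot.mk _ φ
        by_cases he : φ.len % 2 = 0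
        · have h0 : (φ.len : ZMod 2) = 0 := by
            rw [ZMod.natCast_eq_zero_iff]
            omega
          rw [if_pos h0]
          exact Quot.sound (Relation.EqvGen.symm _ _ (even_to_const hn φ he))
        · have hod : φ.len % 2 = 1 := by omega
          have h1 : (φ.len : ZMod 2) ≠ 0 := by
            rw [Ne, ZMod.natCast_eq_zero_iff]
            omega
          rw [if_neg h1]
          exact Quot.sound (Relation.EqvGen.symm _ _ (odd_to_C3 hn φ hod))
    · intro k
      fin_cases k
      · rfl
      · show ((3:ℕ) : ZMod 2) = 1
        decide
    · intro φ ψ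
      show (((φ.comp ψ).len : ℕ) : ZMod 2) = (φ.len : ZMod 2) + (ψ.len : ZMod 2)
      show ((ψ.len + φ.len : ℕ) : ZMod 2) = _
      push_cast
      ring
end

section
/- The 2-fundamental group of the infinite path graph L (vertices ℤ, edges between consecutive integers) based at 0 is trivial: every loop at 0 is 2-homotopic to the constant path. -/
/-- Edge relation of the infinite path graph `L` on ℤ. -/
def lineE (x y : ℤ) : Prop := y = x + 1 ∨ x = y + 1

lemma line_step_pm (φ : GPath lineE (0 : ℤ) 0) (i : ℕ) (hi : i < φ.len) :
    φ.toFun (i + 1) = φ.toFun i + 1 ∨ φ.toFun (i + 1) = φ.toFun i - 1 := by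
  rcases φ.adj i hi with h | h
  · left; exact h
  · right; omega

lemma line_aux : ∀ n : ℕ, ∀ φ : GPath lineE (0 : ℤ) 0, φ.len = n →
    Htpy lineE φ (GPath.const lineE 0) := by
  intro n
  induction n using Nat.strong_induction_on with
  | _ n ih =>
    intro φ hn
    rcases Nat.eq_zero_or_pos n with h0 | hpos
    · refine Relation.EqvGen.rel _ _ (Or.inr ⟨?_, ?_⟩)
      · simp [hn, h0, GPath.const]
      · intro i hi
        rw [hn, h0] at hi
        omega
    · -- find a back-and-forth step
      have hk : ∃ k, k + 2 ≤ n ∧ φ.toFun k = φ.toFun (k + 2) := by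
        by_contra hc
        push_neg at hc
        set d : ℤ := φ.toFun 1 - φ.toFun 0 with hd
        have hd1 : d = 1 ∨ d = -1 := by
          have h := line_step_pm φ 0 (by omega)
          norm_num at h
          omega
        have hstep : ∀ i, i < n → φ.toFun (i + 1) = φ.toFun i + d := by
          intro i
          induction i with
          | zero => intro _; simp [hd]
          | succ j ihj =>
            intro hlt
            have h1 := ihj (by omega)
            have hne := hc j (by omega)
            have h2 := line_step_pm φ (j + 1) (by omega)
            rw [show j + 1 + 1 = j + 2 from rfl] at h2 ⊢
            omega
        have hlin : ∀ i, i ≤ n → φ.toFun i = (i : ℤ) * d := by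
          intro i
          induction i with
          | zero => intro _; simp [φ.src]
          | succ j ihj =>
            intro hle
            rw [hstep j (by omega), ihj (by omega)]
            push_cast
            ring
        have h0 : φ.toFun n = 0 := by rw [← hn]; exact φ.tgt
        have := hlin n (le_refl n)
        rw [h0] at this
        rcases hd1 with h | h <;> rw [h] at this <;> simp at this <;> omega
      obtain ⟨k, hk2, hkeq⟩ := hk
      set ψ : GPath lineE (0 : ℤ) 0 := {
        len := n - 2
        toFun := fun j => if j ≤ k then φ.toFun j else φ.toFun (j + 2)
        src := by simp [φ.src]
        tgt := by
          by_cases h : n - 2 ≤ k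
          · simp only [if_pos h]
            rw [show n - 2 = k by omega, hkeq, show k + 2 = n by omega, ← hn]
            exact φ.tgt
          · simp only [if_neg h]
            rw [show n - 2 + 2 = n by omega, ← hn]
            exact φ.tgt
        adj := by
          intro j hj
          by_cases h1 : j + 1 ≤ k
          · simp only [if_pos h1, if_pos (by omega : j ≤ k)]
            exact φ.adj j (by omega)
          · by_cases h2 : j ≤ k
            · have hjk : j = k := by omega
              simp only [if_pos h2, if_neg h1]
              rw [hjk, hkeq, show k + 1 + 2 = (k + 2) + 1 by omega]
              exact φ.adj (k + 2) (by omega)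
            · simp only [if_neg h2, if_neg h1]
              rw [show j + 1 + 2 = (j + 2) + 1 by omega]
              exact φ.adj (j + 2) (by omega) }
      have hstep : HtpyStep lineE ψ φ := by
        refine Or.inl ⟨by simp [ψ, hn]; omega, k, by simp [ψ]; omega, ?_, ?_⟩
        · intro i hi
          simp only [ψ, if_pos hi]
        · intro i hki hile
          by_cases h : i ≤ k
          · have : i = k := by omega
            simp only [ψ, if_pos h, this, hkeq]
            simp
          · simp only [ψ, if_neg h]
      exact Relation.EqvGen.trans _ _ _
        (Relation.EqvGen.symm _ _ (Relation.EqvGen.rel _ _ hstep))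
        (ih (n - 2) (by omega) ψ rfl)

/-- the 2-fundamental group of the infinite path graph `L` at 0 is
trivial: every loop at 0 is 2-homotopic to the constant path. -/
theorem pi2_line_trivial (φ : GPath lineE (0 : ℤ) 0) :
    Htpy lineE φ (GPath.const lineE 0) := by
  exact line_aux φ.len φ rfl
end

section
/- For r = 3 or r ≥ 5, the 2-fundamental group π₁²(C_r, 0) of the cycle graph C_r is isomorphic to ℤ; in particular π₁²(K₃) ≅ ℤ. -/
/-- Edge relation of the cycle graph `C_m` on `ZMod m`. -/
def cycE (m : ℕ) (x y : ZMod m) : Prop := y = x + 1 ∨ x = y + 1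
section Aux

open Finset

variable {m : ℕ}

lemma cycE_symm {x y : ZMod m} (h : cycE m x y) : cycE m y x := by
  rcases h with h | h
  · exact Or.inr h
  · exact Or.inl h

/-- Sign of a step. -/
def stepSign (x y : ZMod m) : ℤ := if y = x + 1 then 1 else -1

lemma stepSign_eq_or (x y : ZMod m) : stepSign x y = 1 ∨ stepSign x y = -1 := by
  unfold stepSign; split_ifs <;> simp

lemma stepSign_cast {x y : ZMod m} (h : cycE m x y) :
    ((stepSign x y : ℤ) : ZMod m) = y - x := by
  unfold stepSign; split_ifs with h1
  · rw [h1]; push_cast; ring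
  · rcases h with h | h
    · exact absurd h h1
    · rw [h]; push_cast; ring

/-- Partial winding sum of a path. -/
def pw {v w : ZMod m} (φ : GPath (cycE m) v w) (n : ℕ) : ℤ :=
  ∑ i ∈ Finset.range n, stepSign (φ.toFun i) (φ.toFun (i + 1))

lemma pw_zero {v w : ZMod m} (φ : GPath (cycE m) v w) : pw φ 0 = 0 := by
  simp [pw]

lemma pw_succ {v w : ZMod m} (φ : GPath (cycE m) v w) (n : ℕ) :
    pw φ (n + 1) = pw φ n + stepSign (φ.toFun n) (φ.toFun (n + 1)) :=
  Finset.sum_range_succ _ _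

/-- Winding sum of a path. -/
def wind {v w : ZMod m} (φ : GPath (cycE m) v w) : ℤ := pw φ φ.len

lemma pw_cast {v w : ZMod m} (φ : GPath (cycE m) v w) :
    ∀ n, n ≤ φ.len → ((pw φ n : ℤ) : ZMod m) = φ.toFun n - φ.toFun 0 := by
  intro n
  induction n with
  | zero => simp [pw_zero]
  | succ n ih =>
    intro hn
    rw [pw_succ, Int.cast_add, ih (by omega), stepSign_cast (φ.adj n (by omega))]
    ring

lemma wind_cast {v w : ZMod m} (φ : GPath (cycE m) v w) :
    ((wind φ : ℤ) : ZMod m) = w - v := by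
  have h := pw_cast φ φ.len le_rfl
  rw [φ.src, φ.tgt] at h
  exact h

lemma wind_eq_pw {v w : ZMod m} (φ : GPath (cycE m) v w) : wind φ = pw φ φ.len := rfl

variable {r : ℕ}

lemma zmod_two_ne (hr : r = 3 ∨ 5 ≤ r) : (2 : ZMod r) ≠ 0 := by
  haveI : NeZero r := ⟨by omega⟩
  intro h
  have h2 : (((2 : ℤ)) : ZMod r) = 0 := by push_cast; exact h
  rw [ZMod.intCast_zmod_eq_zero_iff_dvd] at h2
  have := Int.le_of_dvd (by norm_num) h2
  omega

lemma zmod_four_ne (hr : r = 3 ∨ 5 ≤ r) : (4 : ZMod r) ≠ 0 := by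
  haveI : NeZero r := ⟨by omega⟩
  intro h
  have h2 : (((4 : ℤ)) : ZMod r) = 0 := by push_cast; exact h
  rw [ZMod.intCast_zmod_eq_zero_iff_dvd] at h2
  have h3 := Int.le_of_dvd (by norm_num) h2
  obtain ⟨c, hc⟩ := h2
  rcases hr with h | h
  · subst h; omega
  · omega

lemma stepSign_add_rev (hr : r = 3 ∨ 5 ≤ r) {x y z : ZMod r}
    (h1 : cycE r x y) (h2 : cycE r y z) (hz : z = x) :
    stepSign x y + stepSign y z = 0 := by
  unfold stepSign
  by_cases hy : y = x + 1
  · have hnz : ¬ (z = y + 1) := by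
      intro hzz
      exact zmod_two_ne hr (by linear_combination hz - hzz - hy)
    rw [if_pos hy, if_neg hnz]; ring
  · rcases h1 with h1 | h1
    · exact absurd h1 hy
    · have hzz : z = y + 1 := by rw [hz, h1]
      rw [if_neg hy, if_pos hzz]; ring

lemma forceD2 (hr : r = 3 ∨ 5 ≤ r) {Pn Pn1 Qn Qn1 : ZMod r} {a b : ℤ}
    (ha : a = 1 ∨ a = -1) (hb : b = 1 ∨ b = -1)
    (hPa : Pn1 = Pn + (a : ZMod r)) (hQb : Qn1 = Qn + (b : ZMod r))
    (hD : Qn = Pn + 2)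
    (h1 : Qn1 = Pn + 1 ∨ Pn = Qn1 + 1)
    (h2 : Qn = Pn1 + 1 ∨ Pn1 = Qn + 1) :
    a = 1 ∧ b = -1 := by
  constructor
  · rcases ha with ha | ha
    · exact ha
    · exfalso
      subst ha
      push_cast at hPa
      rcases h2 with h2 | h2
      · exact zmod_two_ne hr (by linear_combination h2 + hPa - hD)
      · exact zmod_four_ne hr (by linear_combination hPa - h2 - hD)
  · rcases hb with hb | hb
    · exfalso
      subst hb
      push_cast at hQb
      rcases h1 with h1 | h1
      · exact zmod_two_ne hr (by linear_combination h1 - hQb - hD)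
      · exact zmod_four_ne hr (by linear_combination - hQb - hD - h1)
    · exact hb

lemma forceDneg2 (hr : r = 3 ∨ 5 ≤ r) {Pn Pn1 Qn Qn1 : ZMod r} {a b : ℤ}
    (ha : a = 1 ∨ a = -1) (hb : b = 1 ∨ b = -1)
    (hPa : Pn1 = Pn + (a : ZMod r)) (hQb : Qn1 = Qn + (b : ZMod r))
    (hD : Qn = Pn - 2)
    (h1 : Qn1 = Pn + 1 ∨ Pn = Qn1 + 1)
    (h2 : Qn = Pn1 + 1 ∨ Pn1 = Qn + 1) :
    a = -1 ∧ b = 1 := by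
  have := forceD2 hr hb ha hQb hPa (by linear_combination - hD)
    (h2.symm) (h1.symm)
  exact ⟨this.2, this.1⟩

/-- Invariance of `wind` under case (ii) of `HtpyStep`. -/
lemma wind_eq_of_caseII (hr : r = 3 ∨ 5 ≤ r) {v w : ZMod r} (φ ψ : GPath (cycE r) v w)
    (hlen : φ.len = ψ.len)
    (h : ∀ i < φ.len, cycE r (φ.toFun i) (ψ.toFun (i + 1)) ∧ cycE r (φ.toFun (i + 1)) (ψ.toFun i)) :
    wind φ = wind ψ := by
  have hcast : ∀ n ≤ φ.len, ((pw ψ n - pw φ n : ℤ) : ZMod r) = ψ.toFun n - φ.toFun n := by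
    intro n hn
    rw [Int.cast_sub, pw_cast φ n hn, pw_cast ψ n (by omega), φ.src, ψ.src]
    ring
  have key : ∀ n ≤ φ.len,
      pw ψ n - pw φ n = 0 ∨ pw ψ n - pw φ n = 2 ∨ pw ψ n - pw φ n = -2 := by
    intro n
    induction n with
    | zero => intro _; left; rw [pw_zero, pw_zero]; ring
    | succ n ih =>
      intro hn
      have hn' : n < φ.len := by omega
      obtain ⟨h1, h2⟩ := h n hn'
      have ha := stepSign_eq_or (φ.toFun n) (φ.toFun (n + 1))
      have hb := stepSign_eq_or (ψ.toFun n) (ψ.toFun (n + 1))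
      have hPa : φ.toFun (n + 1) = φ.toFun n
          + ((stepSign (φ.toFun n) (φ.toFun (n + 1)) : ℤ) : ZMod r) := by
        rw [stepSign_cast (φ.adj n hn')]; ring
      have hQb : ψ.toFun (n + 1) = ψ.toFun n
          + ((stepSign (ψ.toFun n) (ψ.toFun (n + 1)) : ℤ) : ZMod r) := by
        rw [stepSign_cast (ψ.adj n (by omega))]; ring
      have hrecφ := pw_succ φ n
      have hrecψ := pw_succ ψ n
      rcases ih (by omega) with h0 | h0 | h0
      · rcases ha with ha' | ha' <;> rcases hb with hb' | hb' <;>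
          rw [ha'] at hrecφ <;> rw [hb'] at hrecψ <;> omega
      · have hD2 : ψ.toFun n = φ.toFun n + 2 := by
          have hc := hcast n (by omega)
          rw [h0] at hc
          push_cast at hc
          linear_combination - hc
        obtain ⟨ha1, hb1⟩ := forceD2 hr ha hb hPa hQb hD2 h1 h2
        rw [ha1] at hrecφ
        rw [hb1] at hrecψ
        omega
      · have hD2 : ψ.toFun n = φ.toFun n - 2 := by
          have hc := hcast n (by omega)
          rw [h0] at hc
          push_cast at hc
          linear_combination - hc
        obtain ⟨ha1, hb1⟩ := forceDneg2 hr ha hb hPa hQb hD2 h1 h2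
        rw [ha1] at hrecφ
        rw [hb1] at hrecψ
        omega
  have hfin : ((pw ψ φ.len - pw φ φ.len : ℤ) : ZMod r) = 0 := by
    rw [hcast φ.len le_rfl, φ.tgt]
    have e2 : ψ.toFun φ.len = w := by rw [hlen]; exact ψ.tgt
    rw [e2]; ring
  have hz : pw ψ φ.len - pw φ φ.len = 0 := by
    rcases key φ.len le_rfl with h0 | h0 | h0
    · exact h0
    · exfalso; rw [h0] at hfin; push_cast at hfin; exact zmod_two_ne hr hfin
    · exfalso; rw [h0] at hfin; push_cast at hfin
      exact zmod_two_ne hr (by linear_combination - hfin)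
  rw [wind_eq_pw, wind_eq_pw, ← hlen]
  omega

/-- Invariance of `wind` under case (i) of `HtpyStep`. -/
lemma wind_eq_of_caseI (hr : r = 3 ∨ 5 ≤ r) {v w : ZMod r} (φ ψ : GPath (cycE r) v w)
    (hlen : φ.len + 2 = ψ.len) {x : ℕ} (hx : x ≤ φ.len)
    (h1 : ∀ i ≤ x, φ.toFun i = ψ.toFun i)
    (h2 : ∀ i, x ≤ i → i ≤ φ.len → φ.toFun i = ψ.toFun (i + 2)) :
    wind φ = wind ψ := by
  set n := φ.len - x with hn
  have e1 : φ.len = x + n := by omega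
  have e2 : ψ.len = (x + 2) + n := by omega
  have hφ : wind φ = (∑ i ∈ Finset.range x, stepSign (φ.toFun i) (φ.toFun (i + 1)))
      + ∑ i ∈ Finset.range n, stepSign (φ.toFun (x + i)) (φ.toFun (x + i + 1)) := by
    rw [wind_eq_pw, pw, e1, Finset.sum_range_add]
  have hψ : wind ψ = ((∑ i ∈ Finset.range x, stepSign (ψ.toFun i) (ψ.toFun (i + 1)))
      + stepSign (ψ.toFun x) (ψ.toFun (x + 1))
      + stepSign (ψ.toFun (x + 1)) (ψ.toFun (x + 2)))
      + ∑ i ∈ Finset.range n, stepSign (ψ.toFun (x + 2 + i)) (ψ.toFun (x + 2 + i + 1)) := by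
    rw [wind_eq_pw, pw, e2, Finset.sum_range_add, Finset.sum_range_succ, Finset.sum_range_succ]
  have hb : ψ.toFun (x + 2) = ψ.toFun x := by
    rw [← h2 x le_rfl hx, ← h1 x le_rfl]
  have hmid : stepSign (ψ.toFun x) (ψ.toFun (x + 1)) + stepSign (ψ.toFun (x + 1)) (ψ.toFun (x + 2)) = 0 :=
    stepSign_add_rev hr (ψ.adj x (by omega)) (ψ.adj (x + 1) (by omega)) hb
  have hhead : (∑ i ∈ Finset.range x, stepSign (φ.toFun i) (φ.toFun (i + 1)))
      = ∑ i ∈ Finset.range x, stepSign (ψ.toFun i) (ψ.toFun (i + 1)) := by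
    refine Finset.sum_congr rfl fun i hi => ?_
    rw [Finset.mem_range] at hi
    rw [h1 i (by omega), h1 (i + 1) (by omega)]
  have htail : (∑ i ∈ Finset.range n, stepSign (φ.toFun (x + i)) (φ.toFun (x + i + 1)))
      = ∑ i ∈ Finset.range n, stepSign (ψ.toFun (x + 2 + i)) (ψ.toFun (x + 2 + i + 1)) := by
    refine Finset.sum_congr rfl fun i hi => ?_
    rw [Finset.mem_range] at hi
    rw [h2 (x + i) (by omega) (by omega), h2 (x + i + 1) (by omega) (by omega)]
    have e3 : x + i + 2 = x + 2 + i := by omega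
    have e4 : x + i + 1 + 2 = x + 2 + i + 1 := by omega
    rw [e3, e4]
  rw [hφ, hψ, hhead, htail]
  omega

/-- `wind` is invariant under a homotopy step. -/
lemma wind_eq_of_htpyStep (hr : r = 3 ∨ 5 ≤ r) {v w : ZMod r} {φ ψ : GPath (cycE r) v w}
    (h : HtpyStep (cycE r) φ ψ) : wind φ = wind ψ := by
  rcases h with ⟨hlen, x, hx, h1, h2⟩ | ⟨hlen, h⟩
  · exact wind_eq_of_caseI hr φ ψ hlen hx h1 h2
  · exact wind_eq_of_caseII hr φ ψ hlen h

/-- `wind` is invariant under homotopy. -/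
lemma wind_eq_of_htpy (hr : r = 3 ∨ 5 ≤ r) {v w : ZMod r} {φ ψ : GPath (cycE r) v w}
    (h : Htpy (cycE r) φ ψ) : wind φ = wind ψ := by
  induction h with
  | rel _ _ h => exact wind_eq_of_htpyStep hr h
  | refl _ => rfl
  | symm _ _ _ ih => exact ih.symm
  | trans _ _ _ _ _ ih1 ih2 => exact ih1.trans ih2
/-- The canonical loop winding `k` times around the cycle. -/
def tau (r : ℕ) (k : ℤ) : GPath (cycE r) (0 : ZMod r) 0 where
  len := r * k.natAbs
  toFun := fun i => if 0 ≤ k then (i : ZMod r) else -(i : ZMod r)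
  src := by simp
  tgt := by
    have h : ((r * k.natAbs : ℕ) : ZMod r) = 0 := by
      push_cast
      rw [ZMod.natCast_self]
      ring
    split_ifs
    · exact h
    · rw [h]; ring
  adj := by
    intro i _
    by_cases h : 0 ≤ k
    · simp only [if_pos h]
      left; push_cast; ring
    · simp only [if_neg h]
      right; push_cast; ring

lemma wind_tau (hr : r = 3 ∨ 5 ≤ r) (k : ℤ) : wind (tau r k) = r * k := by
  by_cases h : 0 ≤ k
  · have hterm : ∀ i ∈ Finset.range (r * k.natAbs),
        stepSign ((tau r k).toFun i) ((tau r k).toFun (i + 1)) = 1 := by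
      intro i _
      have e1 : (tau r k).toFun i = (i : ZMod r) := by simp [tau, h]
      have e2 : (tau r k).toFun (i + 1) = ((i : ZMod r) + 1) := by
        simp only [tau, if_pos h]; push_cast; ring
      rw [e1, e2, stepSign, if_pos rfl]
    have : wind (tau r k) = ∑ i ∈ Finset.range (r * k.natAbs), (1 : ℤ) :=
      Finset.sum_congr rfl hterm
    rw [this, Finset.sum_const, Finset.card_range, nsmul_eq_mul, mul_one]
    push_cast [Int.natAbs_of_nonneg h]
    ring
  · have hterm : ∀ i ∈ Finset.range (r * k.natAbs),
        stepSign ((tau r k).toFun i) ((tau r k).toFun (i + 1)) = -1 := by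
      intro i _
      have e1 : (tau r k).toFun i = -(i : ZMod r) := by simp [tau, h]
      have e2 : (tau r k).toFun (i + 1) = -((i : ZMod r) + 1) := by
        simp only [tau, if_neg h]; push_cast; ring
      rw [e1, e2, stepSign, if_neg]
      intro hc
      exact zmod_two_ne hr (by linear_combination - hc)
    have : wind (tau r k) = ∑ i ∈ Finset.range (r * k.natAbs), (-1 : ℤ) :=
      Finset.sum_congr rfl hterm
    rw [this, Finset.sum_const, Finset.card_range, nsmul_eq_mul]
    have hk : (k.natAbs : ℤ) = -k := by omega
    rw [Nat.cast_mul, hk]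
    ring

/-- Equal-length paths agreeing up to `len` are one homotopy step apart. -/
lemma htpyStep_of_eqOn {v w : ZMod r} (φ ψ : GPath (cycE r) v w) (hlen : φ.len = ψ.len)
    (h : ∀ i ≤ φ.len, φ.toFun i = ψ.toFun i) : HtpyStep (cycE r) φ ψ := by
  right
  refine ⟨hlen, fun i hi => ⟨?_, ?_⟩⟩
  · rw [← h (i + 1) (by omega)]
    exact φ.adj i hi
  · rw [← h i (by omega)]
    exact cycE_symm (φ.adj i hi)

/-- Removing a backtrack at position `x`. -/
def shorten {v w : ZMod r} (ψ : GPath (cycE r) v w) (x : ℕ) (hx : x + 2 ≤ ψ.len)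
    (hb : ψ.toFun (x + 2) = ψ.toFun x) : GPath (cycE r) v w where
  len := ψ.len - 2
  toFun := fun i => if i ≤ x then ψ.toFun i else ψ.toFun (i + 2)
  src := by simp [ψ.src]
  tgt := by
    by_cases h : ψ.len - 2 ≤ x
    · have hxe : x = ψ.len - 2 := by omega
      have h2 : x + 2 = ψ.len := by omega
      rw [if_pos h, ← hxe, ← hb, h2]
      exact ψ.tgt
    · rw [if_neg h]
      have h2 : ψ.len - 2 + 2 = ψ.len := by omega
      rw [h2]
      exact ψ.tgt
  adj := by
    intro i hi
    by_cases h1 : i + 1 ≤ x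
    · rw [if_pos (by omega : i ≤ x), if_pos h1]
      exact ψ.adj i (by omega)
    · by_cases h0 : i ≤ x
      · have hix : i = x := by omega
        rw [if_pos h0, if_neg h1, hix, ← hb]
        exact ψ.adj (x + 2) (by omega)
      · rw [if_neg h0, if_neg h1]
        have e : i + 1 + 2 = (i + 2) + 1 := by omega
        rw [e]
        exact ψ.adj (i + 2) (by omega)

lemma htpyStep_shorten {v w : ZMod r} (ψ : GPath (cycE r) v w) (x : ℕ) (hx : x + 2 ≤ ψ.len)
    (hb : ψ.toFun (x + 2) = ψ.toFun x) :
    HtpyStep (cycE r) (shorten ψ x hx hb) ψ := by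
  left
  refine ⟨by show ψ.len - 2 + 2 = ψ.len; omega, x, by show x ≤ ψ.len - 2; omega, ?_, ?_⟩
  · intro i hi
    show (if i ≤ x then ψ.toFun i else ψ.toFun (i + 2)) = ψ.toFun i
    rw [if_pos hi]
  · intro i hxi _
    show (if i ≤ x then ψ.toFun i else ψ.toFun (i + 2)) = ψ.toFun (i + 2)
    by_cases h : i ≤ x
    · have : i = x := by omega
      rw [if_pos h, this, hb]
    · rw [if_neg h]
/-- A loop with no backtracks is homotopic to the canonical loop. -/
lemma flat_case (hr : r = 3 ∨ 5 ≤ r) (φ : GPath (cycE r) (0 : ZMod r) 0)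
    (hbt : ∀ x, x + 2 ≤ φ.len → φ.toFun (x + 2) ≠ φ.toFun x) (k : ℤ)
    (hk : wind φ = r * k) :
    Quot.mk (Htpy (cycE r)) φ = Quot.mk (Htpy (cycE r)) (tau r k) := by
  haveI : NeZero r := ⟨by omega⟩
  have hrpos : (0 : ℤ) < (r : ℤ) := by exact_mod_cast (by omega : 0 < r)
  by_cases hl : φ.len = 0
  · have hw : wind φ = 0 := by rw [wind_eq_pw, hl, pw_zero]
    have hk0 : k = 0 := by
      have h0 : (r : ℤ) * k = 0 := by rw [← hk, hw]
      rcases mul_eq_zero.mp h0 with h' | h'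
      · omega
      · exact h'
    subst hk0
    refine Quot.sound (Relation.EqvGen.rel _ _ (htpyStep_of_eqOn φ (tau r 0) ?_ ?_))
    · rw [hl]; show 0 = r * (0 : ℤ).natAbs; simp
    · intro i hi
      have hi0 : i = 0 := by omega
      subst hi0
      rw [φ.src]
      show (0 : ZMod r) = if (0 : ℤ) ≤ 0 then ((0 : ℕ) : ZMod r) else -((0 : ℕ) : ZMod r)
      simp
  · have h0 : 0 < φ.len := by omega
    rcases φ.adj 0 h0 with hup | hdown
    · -- all steps go up
      have hall : ∀ i, i < φ.len → φ.toFun (i + 1) = φ.toFun i + 1 := by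
        intro i
        induction i with
        | zero => intro _; exact hup
        | succ n ih =>
          intro hn
          rcases φ.adj (n + 1) hn with h' | h'
          · exact h'
          · exfalso
            have e := ih (by omega)
            exact hbt n (by omega) (by linear_combination e - h')
      have hval : ∀ i, i ≤ φ.len → φ.toFun i = (i : ZMod r) := by
        intro i
        induction i with
        | zero => intro _; rw [φ.src]; simp
        | succ n ih =>
          intro hn
          rw [hall n (by omega), ih (by omega)]
          push_cast; ring
      have hlen0 : ((φ.len : ℕ) : ZMod r) = 0 := by rw [← hval φ.len le_rfl, φ.tgt]
      have hw : wind φ = (φ.len : ℤ) := by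
        rw [wind_eq_pw]
        have hpw : ∀ n, n ≤ φ.len → pw φ n = (n : ℤ) := by
          intro n
          induction n with
          | zero => intro _; rw [pw_zero]; simp
          | succ n ih =>
            intro hn
            have hs : stepSign (φ.toFun n) (φ.toFun (n + 1)) = 1 := by
              rw [stepSign, if_pos (hall n (by omega))]
            rw [pw_succ, ih (by omega), hs]
            push_cast; ring
        exact hpw φ.len le_rfl
      have hk' : (r : ℤ) * k = (φ.len : ℤ) := by rw [← hk, hw]
      have hk0 : 0 ≤ k := by
        by_contra h'
        push_neg at h'
        have h1 : (r : ℤ) * k < 0 := mul_neg_of_pos_of_neg hrpos h'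
        have h2 : (0 : ℤ) ≤ (φ.len : ℤ) := by positivity
        linarith
      have hlen_eq : (tau r k).len = φ.len := by
        show r * k.natAbs = φ.len
        have h1 : ((r * k.natAbs : ℕ) : ℤ) = (φ.len : ℤ) := by
          rw [Nat.cast_mul]
          have h2 : (k.natAbs : ℤ) = k := by omega
          rw [h2, hk']
        exact_mod_cast h1
      refine Quot.sound (Relation.EqvGen.rel _ _
        (htpyStep_of_eqOn φ (tau r k) hlen_eq.symm ?_))
      intro i hi
      rw [hval i hi]
      show ((i : ℕ) : ZMod r) = if (0 : ℤ) ≤ k then ((i : ℕ) : ZMod r) else -((i : ℕ) : ZMod r)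
      rw [if_pos hk0]
    · -- all steps go down
      have hall : ∀ i, i < φ.len → φ.toFun i = φ.toFun (i + 1) + 1 := by
        intro i
        induction i with
        | zero => intro _; exact hdown
        | succ n ih =>
          intro hn
          rcases φ.adj (n + 1) hn with h' | h'
          · exfalso
            have e := ih (by omega)
            exact hbt n (by omega) (by linear_combination h' - e)
          · exact h'
      have hval : ∀ i, i ≤ φ.len → φ.toFun i = -(i : ZMod r) := by
        intro i
        induction i with
        | zero => intro _; rw [φ.src]; simp
        | succ n ih =>
          intro hn
          have h' := hall n (by omega)
          rw [ih (by omega)] at h'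
          push_cast
          linear_combination - h'
      have hlen0 : ((φ.len : ℕ) : ZMod r) = 0 := by
        have := hval φ.len le_rfl
        rw [φ.tgt] at this
        linear_combination this
      have hw : wind φ = -(φ.len : ℤ) := by
        rw [wind_eq_pw]
        have hpw : ∀ n, n ≤ φ.len → pw φ n = -(n : ℤ) := by
          intro n
          induction n with
          | zero => intro _; rw [pw_zero]; simp
          | succ n ih =>
            intro hn
            have hs : stepSign (φ.toFun n) (φ.toFun (n + 1)) = -1 := by
              rw [stepSign, if_neg]
              intro hcc
              exact zmod_two_ne hr (by linear_combination - hcc - hall n (by omega))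
            rw [pw_succ, ih (by omega), hs]
            push_cast; ring
        exact hpw φ.len le_rfl
      have hk' : (r : ℤ) * k = -(φ.len : ℤ) := by rw [← hk, hw]
      have hlpos : (0 : ℤ) < (φ.len : ℤ) := by exact_mod_cast h0
      have hk0 : ¬ (0 : ℤ) ≤ k := by
        intro h'
        have h1 : (0 : ℤ) ≤ (r : ℤ) * k := mul_nonneg (le_of_lt hrpos) h'
        linarith
      have hlen_eq : (tau r k).len = φ.len := by
        show r * k.natAbs = φ.len
        have h1 : ((r * k.natAbs : ℕ) : ℤ) = (φ.len : ℤ) := by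
          rw [Nat.cast_mul]
          have h2 : (k.natAbs : ℤ) = -k := by omega
          rw [h2]
          linarith [hk']
        exact_mod_cast h1
      refine Quot.sound (Relation.EqvGen.rel _ _
        (htpyStep_of_eqOn φ (tau r k) hlen_eq.symm ?_))
      intro i hi
      rw [hval i hi]
      show -((i : ℕ) : ZMod r) = if (0 : ℤ) ≤ k then ((i : ℕ) : ZMod r) else -((i : ℕ) : ZMod r)
      rw [if_neg hk0]

/-- Every loop is homotopic to the canonical loop of its winding number. -/
lemma reduce (hr : r = 3 ∨ 5 ≤ r) :
    ∀ N (φ : GPath (cycE r) (0 : ZMod r) 0), φ.len ≤ N → ∀ k : ℤ, wind φ = r * k →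
      Quot.mk (Htpy (cycE r)) φ = Quot.mk (Htpy (cycE r)) (tau r k) := by
  intro N
  induction N with
  | zero =>
    intro φ hN k hk
    exact flat_case hr φ (fun x hx => by omega) k hk
  | succ N ih =>
    intro φ hN k hk
    by_cases hex : ∃ x, x + 2 ≤ φ.len ∧ φ.toFun (x + 2) = φ.toFun x
    · obtain ⟨x, hx, hb⟩ := hex
      have hstep := htpyStep_shorten φ x hx hb
      have hw : wind (shorten φ x hx hb) = wind φ := wind_eq_of_htpyStep hr hstep
      have hlen : (shorten φ x hx hb).len ≤ N := by
        show φ.len - 2 ≤ N; omega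
      have h1 := ih (shorten φ x hx hb) hlen k (by rw [hw]; exact hk)
      have h2 : Quot.mk (Htpy (cycE r)) φ = Quot.mk (Htpy (cycE r)) (shorten φ x hx hb) :=
        Quot.sound (Relation.EqvGen.symm _ _ (Relation.EqvGen.rel _ _ hstep))
      rw [h2, h1]
    · push_neg at hex
      exact flat_case hr φ hex k hk

/-- Winding number is additive under concatenation. -/
lemma wind_comp {u v w : ZMod r} (φ : GPath (cycE r) v w) (ψ : GPath (cycE r) u v) :
    wind (φ.comp ψ) = wind φ + wind ψ := by
  have ht : ∀ i ≤ ψ.len, (φ.comp ψ).toFun i = ψ.toFun i := by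
    intro i hi
    show (if i < ψ.len then ψ.toFun i else φ.toFun (i - ψ.len)) = ψ.toFun i
    by_cases h : i < ψ.len
    · rw [if_pos h]
    · have hie : i = ψ.len := by omega
      rw [if_neg h, hie, Nat.sub_self, φ.src, ψ.tgt]
  have ht2 : ∀ i, (φ.comp ψ).toFun (ψ.len + i) = φ.toFun i := by
    intro i
    show (if ψ.len + i < ψ.len then ψ.toFun (ψ.len + i) else φ.toFun (ψ.len + i - ψ.len))
      = φ.toFun i
    rw [if_neg (by omega)]
    congr 1
    omega
  show pw (φ.comp ψ) (ψ.len + φ.len) = pw φ φ.len + pw ψ ψ.len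
  rw [pw, Finset.sum_range_add]
  have e1 : (∑ i ∈ Finset.range ψ.len,
      stepSign ((φ.comp ψ).toFun i) ((φ.comp ψ).toFun (i + 1))) = pw ψ ψ.len := by
    refine Finset.sum_congr rfl fun i hi => ?_
    rw [Finset.mem_range] at hi
    rw [ht i (by omega), ht (i + 1) (by omega)]
  have e2 : (∑ i ∈ Finset.range φ.len,
      stepSign ((φ.comp ψ).toFun (ψ.len + i)) ((φ.comp ψ).toFun (ψ.len + i + 1)))
      = pw φ φ.len := by
    refine Finset.sum_congr rfl fun i hi => ?_
    have e3 : ψ.len + i + 1 = ψ.len + (i + 1) := by omega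
    rw [ht2 i, e3, ht2 (i + 1)]
  rw [e1, e2]
  ring
end Aux

/-- for r = 3 or r ≥ 5, `π₁²(C_r, 0) ≅ ℤ`: there is a bijection from
the set of 2-homotopy classes of loops at 0 to ℤ turning concatenation into addition. -/
theorem pi2_cycle (r : ℕ) (hr : r = 3 ∨ 5 ≤ r) :
    ∃ e : Quot (Htpy (cycE r) (v := (0 : ZMod r)) (w := 0)) ≃ ℤ,
      ∀ φ ψ : GPath (cycE r) (0 : ZMod r) 0,
        e (Quot.mk _ (φ.comp ψ)) = e (Quot.mk _ φ) + e (Quot.mk _ ψ) := by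
  haveI : NeZero r := ⟨by omega⟩
  have hrne : (r : ℤ) ≠ 0 := by
    have : r ≠ 0 := by omega
    exact_mod_cast this
  have hdvd : ∀ φ : GPath (cycE r) (0 : ZMod r) 0, ∃ k : ℤ, wind φ = r * k := by
    intro φ
    have h := wind_cast φ
    have h0 : ((wind φ : ℤ) : ZMod r) = 0 := by rw [h]; ring
    obtain ⟨k, hk⟩ := (ZMod.intCast_zmod_eq_zero_iff_dvd _ _).mp h0
    exact ⟨k, hk⟩
  have hinv : ∀ a b : GPath (cycE r) (0 : ZMod r) 0, Htpy (cycE r) a b →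
      wind a / (r : ℤ) = wind b / (r : ℤ) := fun a b h => by
    rw [wind_eq_of_htpy hr h]
  let g : Quot (Htpy (cycE r) (v := (0 : ZMod r)) (w := 0)) → ℤ :=
    Quot.lift (fun φ => wind φ / (r : ℤ)) hinv
  have gmk : ∀ φ : GPath (cycE r) (0 : ZMod r) 0, g (Quot.mk _ φ) = wind φ / (r : ℤ) :=
    fun φ => rfl
  have gval : ∀ (φ : GPath (cycE r) (0 : ZMod r) 0) (k : ℤ), wind φ = r * k →
      g (Quot.mk _ φ) = k := by
    intro φ k hk
    rw [gmk, hk, Int.mul_ediv_cancel_left _ hrne]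
  have hg : Function.Bijective g := by
    constructor
    · intro q1 q2
      induction q1 using Quot.ind with | _ φ =>
      induction q2 using Quot.ind with | _ ψ =>
      intro hgq
      obtain ⟨k1, hk1⟩ := hdvd φ
      obtain ⟨k2, hk2⟩ := hdvd ψ
      have e1 := gval φ k1 hk1
      have e2 := gval ψ k2 hk2
      have hkk : k1 = k2 := by rw [← e1, ← e2, hgq]
      rw [reduce hr φ.len φ le_rfl k1 hk1, reduce hr ψ.len ψ le_rfl k2 hk2, hkk]
    · intro k
      refine ⟨Quot.mk _ (tau r k), gval (tau r k) k (wind_tau hr k)⟩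
  refine ⟨Equiv.ofBijective g hg, ?_⟩
  intro φ ψ
  obtain ⟨k1, hk1⟩ := hdvd φ
  obtain ⟨k2, hk2⟩ := hdvd ψ
  have hc : wind (φ.comp ψ) = (r : ℤ) * (k1 + k2) := by
    rw [wind_comp, hk1, hk2]; ring
  simp only [Equiv.ofBijective_apply]
  rw [gval _ _ hc, gval φ k1 hk1, gval ψ k2 hk2]
end
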